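/- arXiv:2007.14539 — 6 statements merged into one kernel-verified Lean document; each statement's English description precedes it below -/
import Mathlib

section
/- Let V ⊆ [n] and suppose m ≥ |V|. There is a constant T = T(α) such that Pr[s_max(A_V) > T·√m] ≤ e^{−cm} for an absolute constant c > 0, where s_max(A_V) is the largest singular value of the m × |V| submatrix A_V. -/
open MeasureTheory ProbabilityTheory Real Filter Topology

noncomputable section

/-- Euclidean dot product on `Fin n → ℝ`. -/
def dot {n : ℕ} (a b : Fin n → ℝ) : ℝ := ∑ i, a i * b i

/-- Euclidean (ℓ²) norm on `Fin n → ℝ`. -/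
def norm2 {n : ℕ} (v : Fin n → ℝ) : ℝ := Real.sqrt (∑ i, (v i) ^ 2)

/-- ℓ¹ norm on `Fin n → ℝ`. -/
def norm1 {n : ℕ} (v : Fin n → ℝ) : ℝ := ∑ i, |v i|

/-- Support of a vector, as a finset. -/
def spt {n : ℕ} (v : Fin n → ℝ) : Finset (Fin n) := Finset.univ.filter fun i => v i ≠ 0

/-- Standard Gaussian measure `N(0, I_n)` on `Fin n → ℝ`. -/
def stdGaussianPi (n : ℕ) : Measure (Fin n → ℝ) := Measure.pi fun _ => gaussianReal 0 1

/-- Survival probability `γ_S(t) = Pr[Z + t ∈ S]`, `Z ~ N(0,1)`. -/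
def gammaS (S : Set ℝ) (t : ℝ) : ℝ := (gaussianReal t 1 S).toReal

/-- Truncated normal `N(t, 1; S)`. -/
def truncNormal (S : Set ℝ) (t : ℝ) : Measure ℝ := (gaussianReal t 1)[|S]

/-- `μ_t`, the mean of `N(t,1;S)`. -/
def truncMean (S : Set ℝ) (t : ℝ) : ℝ := ∫ z, z ∂(truncNormal S t)

/-- `Var(Z_t)`, the variance of `N(t,1;S)`. -/
def truncVar (S : Set ℝ) (t : ℝ) : ℝ := variance id (truncNormal S t)

/-- Constant survival probability assumption: `E_{a ~ N(0,I_n)}[γ_S(aᵀ x*)] ≥ α`. -/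
def CSP (n : ℕ) (xstar : Fin n → ℝ) (S : Set ℝ) (α : ℝ) : Prop :=
  α ≤ ∫ a, gammaS S (dot a xstar) ∂(stdGaussianPi n)

/-- `m` i.i.d. untruncated samples `(a_j, η_j)`, `a_j ~ N(0,I_n)`, `η_j ~ N(0,1)`. -/
def rawMeasure (m n : ℕ) : Measure (Fin m → (Fin n → ℝ) × ℝ) :=
  Measure.pi fun _ => (stdGaussianPi n).prod (gaussianReal 0 1)

/-- The law of `m` truncated samples: condition the `m` i.i.d. pairs `(a_j, η_j)` on all
responses `a_jᵀ x* + η_j` lying in `S`.  (Equivalently, each sample is i.i.d. from the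
law of `(a, aᵀx* + η)` conditioned on `aᵀx* + η ∈ S`.) -/
def dataMeasure (m n : ℕ) (xstar : Fin n → ℝ) (S : Set ℝ) :
    Measure (Fin m → (Fin n → ℝ) × ℝ) :=
  (rawMeasure m n)[|{ω | ∀ j, dot (ω j).1 xstar + (ω j).2 ∈ S}]

/-- The design matrix `A` (rows `A_j`) of a data set. -/
def mat {m n : ℕ} (ω : Fin m → (Fin n → ℝ) × ℝ) : Fin m → Fin n → ℝ := fun j => (ω j).1

/-- The response vector `y`, `y_j = A_jᵀ x* + η_j`. -/
def yvec {m n : ℕ} (xstar : Fin n → ℝ) (ω : Fin m → (Fin n → ℝ) × ℝ) : Fin m → ℝ :=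
  fun j => dot (ω j).1 xstar + (ω j).2

/-- Truncated negative log-likelihood. -/
def nll (S : Set ℝ) {m n : ℕ} (A : Fin m → Fin n → ℝ) (y : Fin m → ℝ) (x : Fin n → ℝ) : ℝ :=
  (1 / (m : ℝ)) * ∑ j, ((dot (A j) x - y j) ^ 2 / 2
    + Real.log (∫ z in S, Real.exp (-(dot (A j) x - z) ^ 2 / 2)))


open Metric
open scoped ENNReal NNReal

instance stdGaussianPi.instProb (n : ℕ) : IsProbabilityMeasure (stdGaussianPi n) := by
  unfold stdGaussianPi; infer_instance

instance rawMeasure.instProb (m n : ℕ) : IsProbabilityMeasure (rawMeasure m n) := by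
  unfold rawMeasure; infer_instance

lemma lintegral_pi_prod {α : Type*} [MeasurableSpace α] (μ : Measure α) [SigmaFinite μ] :
    ∀ {k : ℕ} (g : Fin k → α → ℝ≥0∞), (∀ i, Measurable (g i)) →
      ∫⁻ x, ∏ i, g i (x i) ∂(Measure.pi fun _ : Fin k => μ) = ∏ i, ∫⁻ x, g i x ∂μ := by
  intro k
  induction k with
  | zero =>
      intro g _
      simp only [Finset.univ_eq_empty, Finset.prod_empty, lintegral_one]
      rw [← Set.pi_univ Set.univ, Measure.pi_pi]
      simp
  | succ k ih =>
      intro g hg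
      have h := measurePreserving_piFinSuccAbove (fun _ : Fin (k+1) => μ) 0
      set e := MeasurableEquiv.piFinSuccAbove (fun _ : Fin (k+1) => α) 0 with he
      have key : ∫⁻ x, ∏ i, g i (x i) ∂(Measure.pi fun _ : Fin (k+1) => μ)
          = ∫⁻ p, ∏ i, g i (e.symm p i)
              ∂(μ.prod (Measure.pi fun _ : Fin k => μ)) := by
        rw [← h.map_eq, lintegral_map_equiv]
        simp
      rw [key]
      have hmeas : Measurable fun xs : Fin k → α => ∏ j, g j.succ (xs j) :=
        Finset.measurable_prod _ fun j _ => (hg j.succ).comp (measurable_pi_apply j)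
      have key2 : ∀ p : α × (Fin k → α),
          ∏ i, g i (e.symm p i) = g 0 p.1 * ∏ j, g j.succ (p.2 j) := by
        intro p
        simp [he, Fin.prod_univ_succ, Fin.insertNth_zero]
      simp_rw [key2]
      have hm2 : Measurable fun p : α × (Fin k → α) => g 0 p.1 * ∏ j, g j.succ (p.2 j) :=
        ((hg 0).comp measurable_fst).mul (hmeas.comp measurable_snd)
      rw [lintegral_prod _ hm2.aemeasurable]
      calc ∫⁻ a, ∫⁻ xs, g 0 a * ∏ j, g j.succ (xs j) ∂(Measure.pi fun _ : Fin k => μ) ∂μ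
          = ∫⁻ a, g 0 a * ∫⁻ xs, ∏ j, g j.succ (xs j) ∂(Measure.pi fun _ : Fin k => μ) ∂μ := by
            congr 1; ext a; rw [lintegral_const_mul _ hmeas]
        _ = (∫⁻ a, g 0 a ∂μ) * ∫⁻ xs, ∏ j, g j.succ (xs j) ∂(Measure.pi fun _ : Fin k => μ) := by
            rw [lintegral_mul_const _ (hg 0)]
        _ = ∏ i, ∫⁻ x, g i x ∂μ := by
            rw [ih _ fun j => hg j.succ, Fin.prod_univ_succ]

lemma gauss_lin (t : ℝ) :
    ∫⁻ x, ENNReal.ofReal (exp (t * x)) ∂(gaussianReal 0 1)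
      = ENNReal.ofReal (exp (t ^ 2 / 2)) := by
  have hmeas : Measurable fun x : ℝ => ENNReal.ofReal (exp (t * x)) := by
    fun_prop
  rw [gaussianReal_of_var_ne_zero 0 one_ne_zero,
    lintegral_withDensity_eq_lintegral_mul _ (measurable_gaussianPDF 0 1) hmeas]
  have key : ∀ x : ℝ, (gaussianPDF 0 1 * fun x => ENNReal.ofReal (exp (t * x))) x
      = ENNReal.ofReal (((Real.sqrt (2 * π))⁻¹ * exp (t ^ 2 / 2)) * exp (-(1/2) * (x - t) ^ 2)) := by
    intro x
    simp only [Pi.mul_apply, gaussianPDF, ← ENNReal.ofReal_mul (gaussianPDFReal_nonneg 0 1 x)]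
    congr 1
    simp only [gaussianPDFReal, NNReal.coe_one, mul_one, sub_zero]
    rw [mul_assoc, ← Real.exp_add, mul_assoc, ← Real.exp_add]
    congr 2
    ring
  simp_rw [key]
  have hint : Integrable (fun x : ℝ =>
      ((Real.sqrt (2 * π))⁻¹ * exp (t ^ 2 / 2)) * exp (-(1/2) * (x - t) ^ 2)) := by
    refine Integrable.const_mul ?_ _
    have h := (integrable_exp_neg_mul_sq (show (0:ℝ) < 1/2 by norm_num))
    exact h.comp_sub_right t
  rw [← ofReal_integral_eq_lintegral_ofReal hint (Filter.Eventually.of_forall fun x => by positivity)]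
  congr 1
  rw [integral_const_mul]
  have : ∫ x : ℝ, exp (-(1/2) * (x - t) ^ 2) = ∫ x : ℝ, exp (-(1/2) * x ^ 2) :=
    integral_sub_right_eq_self (fun x => exp (-(1/2) * x ^ 2)) t
  rw [this, integral_gaussian]
  have h2 : Real.sqrt (π / (1/2)) = Real.sqrt (2 * π) := by norm_num [mul_comm]
  rw [h2]
  have h3 : Real.sqrt (2 * π) ≠ 0 := by positivity
  field_simp

lemma gauss_sq :
    ∫⁻ x, ENNReal.ofReal (exp (x ^ 2 / 4)) ∂(gaussianReal 0 1)
      = ENNReal.ofReal (Real.sqrt 2) := by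
  have hmeas : Measurable fun x : ℝ => ENNReal.ofReal (exp (x ^ 2 / 4)) := by fun_prop
  rw [gaussianReal_of_var_ne_zero 0 one_ne_zero,
    lintegral_withDensity_eq_lintegral_mul _ (measurable_gaussianPDF 0 1) hmeas]
  have key : ∀ x : ℝ, (gaussianPDF 0 1 * fun x => ENNReal.ofReal (exp (x ^ 2 / 4))) x
      = ENNReal.ofReal ((Real.sqrt (2 * π))⁻¹ * exp (-(1/4) * x ^ 2)) := by
    intro x
    simp only [Pi.mul_apply, gaussianPDF, ← ENNReal.ofReal_mul (gaussianPDFReal_nonneg 0 1 x)]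
    congr 1
    simp only [gaussianPDFReal, NNReal.coe_one, mul_one, sub_zero]
    rw [mul_assoc, ← Real.exp_add]
    congr 1
    ring
  simp_rw [key]
  have hint : Integrable (fun x : ℝ => (Real.sqrt (2 * π))⁻¹ * exp (-(1/4) * x ^ 2)) :=
    (integrable_exp_neg_mul_sq (show (0:ℝ) < 1/4 by norm_num)).const_mul _
  rw [← ofReal_integral_eq_lintegral_ofReal hint (Filter.Eventually.of_forall fun x => by positivity)]
  congr 1
  rw [integral_const_mul, integral_gaussian]
  have h4 : Real.sqrt (π / (1/4)) = Real.sqrt 2 * Real.sqrt (2 * π) := by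
    rw [← Real.sqrt_mul (by norm_num : (0:ℝ) ≤ 2)]
    congr 1
    ring
  rw [h4]
  have h3 : Real.sqrt (2 * π) ≠ 0 := by positivity
  field_simp

lemma sep_card_le {ι : Type*} [Fintype ι] (N : Finset (EuclideanSpace ℝ ι))
    (h1 : ∀ u ∈ N, ‖u‖ ≤ 1)
    (h2 : ∀ x ∈ N, ∀ y ∈ N, x ≠ y → 1/2 < ‖x - y‖) :
    N.card ≤ 5 ^ Fintype.card ι := by
  set d := Fintype.card ι
  set μ : Measure (EuclideanSpace ℝ ι) := volume
  have hfr : Module.finrank ℝ (EuclideanSpace ℝ ι) = d := finrank_euclideanSpace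
  have hdisj : (↑N : Set (EuclideanSpace ℝ ι)).PairwiseDisjoint
      fun x => closedBall x (1/4) := by
    intro x hx y hy hxy
    refine closedBall_disjoint_closedBall ?_
    rw [dist_eq_norm]
    have := h2 x hx y hy hxy
    linarith
  have hsub : (⋃ x ∈ N, closedBall x (1/4)) ⊆ closedBall 0 (5/4) := by
    intro z hz
    simp only [Set.mem_iUnion] at hz
    obtain ⟨x, hx, hz⟩ := hz
    rw [mem_closedBall, dist_zero_right]
    rw [mem_closedBall, dist_eq_norm] at hz
    calc ‖z‖ = ‖(z - x) + x‖ := by rw [sub_add_cancel]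
      _ ≤ ‖z - x‖ + ‖x‖ := norm_add_le _ _
      _ ≤ 1/4 + 1 := add_le_add hz (h1 x hx)
      _ = 5/4 := by norm_num
  have hmeas : μ (⋃ x ∈ N, closedBall x (1/4)) = ∑ x ∈ N, μ (closedBall x (1/4)) :=
    measure_biUnion_finset hdisj fun _ _ => measurableSet_closedBall
  have hball : ∀ x : EuclideanSpace ℝ ι,
      μ (closedBall x (1/4)) = ENNReal.ofReal ((1/4 : ℝ) ^ d) * μ (ball 0 1) := by
    intro x
    rw [Measure.addHaar_closedBall μ x (by norm_num : (0:ℝ) ≤ 1/4), hfr]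
  have hbig : μ (closedBall 0 (5/4)) = ENNReal.ofReal ((5/4 : ℝ) ^ d) * μ (ball 0 1) := by
    rw [Measure.addHaar_closedBall μ 0 (by norm_num : (0:ℝ) ≤ 5/4), hfr]
  have hchain : (N.card : ℝ≥0∞) * (ENNReal.ofReal ((1/4 : ℝ) ^ d) * μ (ball 0 1))
      ≤ ENNReal.ofReal ((5/4 : ℝ) ^ d) * μ (ball 0 1) := by
    calc (N.card : ℝ≥0∞) * (ENNReal.ofReal ((1/4 : ℝ) ^ d) * μ (ball 0 1))
        = ∑ x ∈ N, μ (closedBall x (1/4)) := by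
          rw [Finset.sum_congr rfl fun x _ => hball x, Finset.sum_const, nsmul_eq_mul]
      _ = μ (⋃ x ∈ N, closedBall x (1/4)) := hmeas.symm
      _ ≤ μ (closedBall 0 (5/4)) := measure_mono hsub
      _ = ENNReal.ofReal ((5/4 : ℝ) ^ d) * μ (ball 0 1) := hbig
  have hBpos : μ (ball 0 1) ≠ 0 := (measure_ball_pos μ 0 one_pos).ne'
  have hBtop : μ (ball 0 1) ≠ ⊤ := measure_ball_lt_top.ne
  rw [← mul_assoc] at hchain
  have hchain2 := (ENNReal.mul_le_mul_iff_left hBpos hBtop).1 hchain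
  have hsplit : ENNReal.ofReal ((5/4 : ℝ) ^ d)
      = (5 ^ d : ℕ) * ENNReal.ofReal ((1/4 : ℝ) ^ d) := by
    rw [← ENNReal.ofReal_natCast (5 ^ d), ← ENNReal.ofReal_mul (by positivity)]
    congr 1
    push_cast
    rw [← mul_pow]
    norm_num
  rw [hsplit] at hchain2
  have hq : (0:ℝ) < (1/4 : ℝ) ^ d := by positivity
  have := (ENNReal.mul_le_mul_iff_left (by simp [ENNReal.ofReal_eq_zero, not_le, hq])
    ENNReal.ofReal_ne_top).1 hchain2
  exact_mod_cast this

lemma exists_net (ι : Type*) [Fintype ι] :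
    ∃ N : Finset (EuclideanSpace ℝ ι), (∀ u ∈ N, ‖u‖ ≤ 1) ∧
      N.card ≤ 5 ^ Fintype.card ι ∧
      ∀ v : EuclideanSpace ℝ ι, ‖v‖ ≤ 1 → ∃ u ∈ N, ‖v - u‖ ≤ 1/2 := by
  classical
  by_contra hcon
  push_neg at hcon
  have grow : ∀ k : ℕ, ∃ N : Finset (EuclideanSpace ℝ ι),
      (∀ u ∈ N, ‖u‖ ≤ 1) ∧ (∀ x ∈ N, ∀ y ∈ N, x ≠ y → 1/2 < ‖x - y‖) ∧ N.card = k := by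
    intro k
    induction k with
    | zero => exact ⟨∅, by simp, by simp, rfl⟩
    | succ k ih =>
        obtain ⟨N, hb, hs, hc⟩ := ih
        obtain ⟨v, hv1, hv2⟩ := hcon N hb (hc ▸ (sep_card_le N hb hs))
        have hvnotin : v ∉ N := by
          intro hvin
          have := hv2 v hvin
          rw [sub_self, norm_zero] at this
          linarith
        refine ⟨insert v N, ?_, ?_, by rw [Finset.card_insert_of_notMem hvnotin, hc]⟩
        · intro u hu
          rcases Finset.mem_insert.1 hu with h | h
          · exact h ▸ hv1
          · exact hb u h
        · intro x hx y hy hxy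
          rcases Finset.mem_insert.1 hx with h | h <;>
            rcases Finset.mem_insert.1 hy with h' | h'
          · exact absurd (h.trans h'.symm) hxy
          · subst h
            exact hv2 y h'
          · subst h'
            have := hv2 x h
            rw [norm_sub_rev]
            linarith
          · exact hs x h y h' hxy
  obtain ⟨N, hb, hs, hc⟩ := grow (5 ^ Fintype.card ι + 1)
  have := sep_card_le N hb hs
  omega

/-- The linear map `u ↦ A_V u` on Euclidean space. -/
def colMap {m n : ℕ} (A : Fin m → Fin n → ℝ) (V : Finset (Fin n)) :
    EuclideanSpace ℝ ↥V →ₗ[ℝ] EuclideanSpace ℝ (Fin m) where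
  toFun u := WithLp.toLp 2 (fun j => ∑ i : ↥V, A j i * u i)
  map_add' u v := by
    ext j
    simp only [PiLp.add_apply]
    rw [← Finset.sum_add_distrib]
    exact Finset.sum_congr rfl fun i _ => by ring
  map_smul' c u := by
    ext j
    simp only [PiLp.smul_apply, RingHom.id_apply, smul_eq_mul, Finset.mul_sum]
    exact Finset.sum_congr rfl fun i _ => by ring

lemma colMap_norm {m n : ℕ} (A : Fin m → Fin n → ℝ) (V : Finset (Fin n))
    (u : EuclideanSpace ℝ ↥V) :
    ‖colMap A V u‖ = Real.sqrt (∑ j, (∑ i : ↥V, A j i * u i) ^ 2) := by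
  rw [EuclideanSpace.norm_eq]
  congr 1
  exact Finset.sum_congr rfl fun j _ => by
    rw [Real.norm_eq_abs, sq_abs]; rfl

lemma reduction {m n : ℕ} (A : Fin m → Fin n → ℝ) (V : Finset (Fin n))
    (N : Finset (EuclideanSpace ℝ ↥V))
    (hnet : ∀ w : EuclideanSpace ℝ ↥V, ‖w‖ ≤ 1 → ∃ u ∈ N, ‖w - u‖ ≤ 1/2)
    (t : ℝ) (ht : 0 ≤ t)
    (v : Fin n → ℝ) (hv1 : ∑ i ∈ V, v i ^ 2 ≤ 1)
    (hv2 : t < Real.sqrt (∑ j, (∑ i ∈ V, A j i * v i) ^ 2)) :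
    ∃ u ∈ N, (t / 2) ^ 2 < ∑ j, (∑ i : ↥V, A j i * u i) ^ 2 := by
  set L := colMap A V with hL
  -- the sup over the closed unit ball is attained
  obtain ⟨w, hwmem, hwmax⟩ := (isCompact_closedBall (0 : EuclideanSpace ℝ ↥V) 1).exists_isMaxOn
    ⟨0, mem_closedBall_self zero_le_one⟩
    ((L.continuous_of_finiteDimensional.norm).continuousOn)
  -- the vector from the event, as element of Euclidean space
  set uv : EuclideanSpace ℝ ↥V := WithLp.toLp 2 (fun i => v i : ↥V → ℝ) with huv
  have huvsum : ∀ j, ∑ i : ↥V, A j i * uv i = ∑ i ∈ V, A j i * v i := by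
    intro j
    exact Finset.sum_coe_sort V (fun i => A j i * v i)
  have huvnorm : ‖uv‖ ≤ 1 := by
    rw [EuclideanSpace.norm_eq]
    have : ∑ i : ↥V, ‖uv i‖ ^ 2 = ∑ i ∈ V, v i ^ 2 := by
      rw [← Finset.sum_coe_sort V (fun i => v i ^ 2)]
      exact Finset.sum_congr rfl fun i _ => by rw [Real.norm_eq_abs, sq_abs]
    rw [this]
    calc Real.sqrt (∑ i ∈ V, v i ^ 2) ≤ Real.sqrt 1 := Real.sqrt_le_sqrt hv1
      _ = 1 := Real.sqrt_one
  have hLuv : t < ‖L uv‖ := by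
    rw [hL, colMap_norm]
    calc t < Real.sqrt (∑ j, (∑ i ∈ V, A j i * v i) ^ 2) := hv2
      _ = Real.sqrt (∑ j, (∑ i : ↥V, A j i * uv i) ^ 2) := by
          congr 1; exact Finset.sum_congr rfl fun j _ => by rw [huvsum]
  have hwle : t < ‖L w‖ :=
    lt_of_lt_of_le hLuv (hwmax (mem_closedBall_zero_iff.2 huvnorm))
  have hwnorm : ‖w‖ ≤ 1 := mem_closedBall_zero_iff.1 hwmem
  obtain ⟨u, huN, hdist⟩ := hnet w hwnorm
  -- ‖L (w - u)‖ ≤ ‖L w‖ / 2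
  have hhalf : ‖L (w - u)‖ ≤ ‖L w‖ / 2 := by
    have hy : ‖(2 : ℝ) • (w - u)‖ ≤ 1 := by
      rw [norm_smul, Real.norm_ofNat]
      linarith
    have hymax : ‖L ((2 : ℝ) • (w - u))‖ ≤ ‖L w‖ := hwmax (mem_closedBall_zero_iff.2 hy)
    rw [_root_.map_smul, norm_smul, Real.norm_ofNat] at hymax
    linarith
  have hLu : t / 2 < ‖L u‖ := by
    have : ‖L w‖ ≤ ‖L u‖ + ‖L (w - u)‖ := by
      calc ‖L w‖ = ‖L u + L (w - u)‖ := by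
            have harg : u + (w - u) = w := by abel
            rw [← map_add, harg]
        _ ≤ ‖L u‖ + ‖L (w - u)‖ := norm_add_le _ _
    linarith
  refine ⟨u, huN, ?_⟩
  have hsq : ‖L u‖ ^ 2 = ∑ j, (∑ i : ↥V, A j i * u i) ^ 2 := by
    rw [hL, colMap_norm, Real.sq_sqrt (Finset.sum_nonneg fun j _ => sq_nonneg _)]
  rw [← hsq]
  exact pow_lt_pow_left₀ hLu (by positivity) (by norm_num)

lemma gauss_dup (y : ℝ) : ENNReal.ofReal (exp (y ^ 2 / 4))
    = ∫⁻ w, ENNReal.ofReal (exp (y / Real.sqrt 2 * w)) ∂(gaussianReal 0 1) := by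
  rw [gauss_lin (y / Real.sqrt 2)]
  congr 2
  rw [div_pow, Real.sq_sqrt (by norm_num : (0:ℝ) ≤ 2)]
  ring

lemma core_row_bound {n : ℕ} (u' : Fin n → ℝ) (hu : ∑ i, u' i ^ 2 ≤ 1) :
    ∫⁻ a, ENNReal.ofReal (exp ((∑ i, a i * u' i) ^ 2 / 4)) ∂(stdGaussianPi n)
      ≤ ENNReal.ofReal (Real.sqrt 2) := by
  have hdot : Measurable fun a : Fin n → ℝ => ∑ i, a i * u' i :=
    Finset.measurable_sum _ fun i _ => (measurable_pi_apply i).mul_const _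
  calc ∫⁻ a, ENNReal.ofReal (exp ((∑ i, a i * u' i) ^ 2 / 4)) ∂(stdGaussianPi n)
      = ∫⁻ a, ∫⁻ w, ENNReal.ofReal (exp ((∑ i, a i * u' i) / Real.sqrt 2 * w))
          ∂(gaussianReal 0 1) ∂(stdGaussianPi n) := by
        exact lintegral_congr fun a => gauss_dup _
    _ = ∫⁻ w, ∫⁻ a, ENNReal.ofReal (exp ((∑ i, a i * u' i) / Real.sqrt 2 * w))
          ∂(stdGaussianPi n) ∂(gaussianReal 0 1) := by
        refine lintegral_lintegral_swap ?_
        refine (Measurable.aemeasurable ?_)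
        have : Measurable fun p : (Fin n → ℝ) × ℝ => (∑ i, p.1 i * u' i) / Real.sqrt 2 * p.2 :=
          ((hdot.comp measurable_fst).div_const _).mul measurable_snd
        exact this.exp.ennreal_ofReal
    _ ≤ ∫⁻ w, ENNReal.ofReal (exp (w ^ 2 / 4)) ∂(gaussianReal 0 1) := by
        refine lintegral_mono_ae (Filter.Eventually.of_forall fun w => ?_)
        have hinner : ∫⁻ a, ENNReal.ofReal (exp ((∑ i, a i * u' i) / Real.sqrt 2 * w))
            ∂(stdGaussianPi n)
            = ENNReal.ofReal (exp (w ^ 2 / 4 * ∑ i, u' i ^ 2)) := by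
          have hexp : ∀ a : Fin n → ℝ,
              ENNReal.ofReal (exp ((∑ i, a i * u' i) / Real.sqrt 2 * w))
              = ∏ i, ENNReal.ofReal (exp (u' i * w / Real.sqrt 2 * a i)) := by
            intro a
            rw [← ENNReal.ofReal_prod_of_nonneg (fun i _ => (exp_pos _).le), ← Real.exp_sum]
            congr 1
            exact congrArg Real.exp (by
              rw [Finset.sum_div, Finset.sum_mul]
              exact Finset.sum_congr rfl fun i _ => by ring)
          simp_rw [hexp]
          rw [stdGaussianPi, lintegral_pi_prod (gaussianReal 0 1)
            (g := fun i x => ENNReal.ofReal (exp (u' i * w / Real.sqrt 2 * x)))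
            (fun i => by fun_prop)]
          have : ∀ i, ∫⁻ x, ENNReal.ofReal (exp (u' i * w / Real.sqrt 2 * x))
              ∂(gaussianReal 0 1) = ENNReal.ofReal (exp (w ^ 2 / 4 * u' i ^ 2)) := by
            intro i
            rw [gauss_lin]
            congr 2
            rw [div_pow, mul_pow, Real.sq_sqrt (by norm_num : (0:ℝ) ≤ 2)]
            ring
          simp_rw [this]
          rw [← ENNReal.ofReal_prod_of_nonneg (fun i _ => (exp_pos _).le), ← Real.exp_sum,
            ← Finset.mul_sum]
        rw [hinner]
        apply ENNReal.ofReal_le_ofReal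
        apply Real.exp_le_exp.2
        exact mul_le_of_le_one_right (by positivity) hu
    _ = ENNReal.ofReal (Real.sqrt 2) := gauss_sq

lemma chernoff (m n : ℕ) (u' : Fin n → ℝ) (hu : ∑ i, u' i ^ 2 ≤ 1) (r : ℝ) :
    rawMeasure m n {ω | r < ∑ j, (∑ i, (ω j).1 i * u' i) ^ 2}
      ≤ ENNReal.ofReal (exp (-(r / 4))) * ENNReal.ofReal (Real.sqrt 2) ^ m := by
  have hdot : Measurable fun a : Fin n → ℝ => ∑ i, a i * u' i :=
    Finset.measurable_sum _ fun i _ => (measurable_pi_apply i).mul_const _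
  set g : (Fin m → (Fin n → ℝ) × ℝ) → ℝ≥0∞ :=
    fun ω => ∏ j, ENNReal.ofReal (exp ((∑ i, (ω j).1 i * u' i) ^ 2 / 4)) with hg
  have hone : Measurable fun p : (Fin n → ℝ) × ℝ =>
      ENNReal.ofReal (exp ((∑ i, p.1 i * u' i) ^ 2 / 4)) :=
    (((hdot.comp measurable_fst).pow_const 2).div_const 4).exp.ennreal_ofReal
  have hgmeas : Measurable g := by
    refine Finset.measurable_prod _ fun j _ => ?_
    exact hone.comp (measurable_pi_apply j)
  have hsub : {ω : Fin m → (Fin n → ℝ) × ℝ | r < ∑ j, (∑ i, (ω j).1 i * u' i) ^ 2}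
      ⊆ {ω | ENNReal.ofReal (exp (r / 4)) ≤ g ω} := by
    intro ω hω
    simp only [Set.mem_setOf_eq] at hω ⊢
    have : exp (r / 4) ≤ exp ((∑ j, (∑ i, (ω j).1 i * u' i) ^ 2) / 4) :=
      Real.exp_le_exp.2 (by linarith)
    refine le_trans (ENNReal.ofReal_le_ofReal this) (le_of_eq ?_)
    simp only [hg]
    rw [← ENNReal.ofReal_prod_of_nonneg (fun i _ => (exp_pos _).le), ← Real.exp_sum,
      Finset.sum_div]
  have hint : ∫⁻ ω, g ω ∂(rawMeasure m n) ≤ ENNReal.ofReal (Real.sqrt 2) ^ m := by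
    simp only [hg]
    rw [rawMeasure, lintegral_pi_prod ((stdGaussianPi n).prod (gaussianReal 0 1))
      (g := fun (_ : Fin m) p => ENNReal.ofReal (exp ((∑ i, p.1 i * u' i) ^ 2 / 4)))
      (fun j => hone)]
    have hone_int : ∫⁻ p, ENNReal.ofReal (exp ((∑ i, p.1 i * u' i) ^ 2 / 4))
        ∂((stdGaussianPi n).prod (gaussianReal 0 1)) ≤ ENNReal.ofReal (Real.sqrt 2) := by
      rw [lintegral_prod _ hone.aemeasurable]
      simp only [lintegral_const, measure_univ, mul_one]
      exact core_row_bound u' hu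
    calc (∏ _j : Fin m, ∫⁻ p, ENNReal.ofReal (exp ((∑ i, p.1 i * u' i) ^ 2 / 4))
          ∂((stdGaussianPi n).prod (gaussianReal 0 1)))
        ≤ ∏ _j : Fin m, ENNReal.ofReal (Real.sqrt 2) :=
          Finset.prod_le_prod' fun j _ => hone_int
      _ = ENNReal.ofReal (Real.sqrt 2) ^ m := by
          rw [Finset.prod_const, Finset.card_univ, Fintype.card_fin]
  have hmarkov := mul_meas_ge_le_lintegral₀ hgmeas.aemeasurable
    (ENNReal.ofReal (exp (r / 4))) (μ := rawMeasure m n)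
  have h0 : (ENNReal.ofReal (exp (r / 4))) ≠ 0 := by
    simp [ENNReal.ofReal_eq_zero, not_le, exp_pos]
  have htop : (ENNReal.ofReal (exp (r / 4))) ≠ ⊤ := ENNReal.ofReal_ne_top
  calc rawMeasure m n {ω | r < ∑ j, (∑ i, (ω j).1 i * u' i) ^ 2}
      ≤ rawMeasure m n {ω | ENNReal.ofReal (exp (r / 4)) ≤ g ω} := measure_mono hsub
    _ ≤ (ENNReal.ofReal (exp (r / 4)))⁻¹ * ∫⁻ ω, g ω ∂(rawMeasure m n) := by
        rw [← one_mul (rawMeasure m n {ω | ENNReal.ofReal (exp (r / 4)) ≤ g ω}),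
          ← ENNReal.inv_mul_cancel h0 htop, mul_assoc]
        exact mul_le_mul_right hmarkov _
    _ ≤ ENNReal.ofReal (exp (-(r / 4))) * ENNReal.ofReal (Real.sqrt 2) ^ m := by
        rw [Real.exp_neg, ← ENNReal.ofReal_inv_of_pos (exp_pos _)]
        exact mul_le_mul_right hint _

/-- Integral of `gammaS` facts. -/
lemma gammaS_facts (n : ℕ) (xstar : Fin n → ℝ) (S : Set ℝ) (hS : MeasurableSet S) :
    (∫ a, gammaS S (dot a xstar) ∂(stdGaussianPi n)) ≤ 1 ∧
    ENNReal.ofReal (∫ a, gammaS S (dot a xstar) ∂(stdGaussianPi n))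
      ≤ ((stdGaussianPi n).prod (gaussianReal 0 1)) {p | dot p.1 xstar + p.2 ∈ S} := by
  have hdm : Measurable fun a : Fin n → ℝ => dot a xstar := by
    show Measurable fun a : Fin n → ℝ => ∑ i, a i * xstar i
    exact Finset.measurable_sum _ fun i _ => (measurable_pi_apply i).mul_const _
  have hC : MeasurableSet {q : ℝ × ℝ | q.1 + q.2 ∈ S} :=
    (measurable_fst.add measurable_snd) hS
  have hFmeas : Measurable fun t : ℝ => (gaussianReal 0 1) {η | t + η ∈ S} :=
    measurable_measure_prodMk_left hC
  have hF_eq : ∀ t : ℝ, (gaussianReal 0 1) {η | t + η ∈ S} = gaussianReal t 1 S := by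
    intro t
    have hmap : (gaussianReal 0 1).map (fun x => t + x) = gaussianReal t 1 := by
      rw [gaussianReal_map_const_add]
      norm_num
    rw [← hmap, Measure.map_apply (measurable_const_add t) hS]
    rfl
  have hγ_eq : (fun a : Fin n → ℝ => gammaS S (dot a xstar))
      = fun a => ((gaussianReal 0 1) {η | dot a xstar + η ∈ S}).toReal := by
    funext a; rw [gammaS, hF_eq]
  have hγ_meas : Measurable fun a : Fin n → ℝ => gammaS S (dot a xstar) := by
    rw [hγ_eq]; exact (hFmeas.comp hdm).ennreal_toReal
  have hγ_nonneg : ∀ a : Fin n → ℝ, 0 ≤ gammaS S (dot a xstar) :=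
    fun a => ENNReal.toReal_nonneg
  have hγ_le_one : ∀ a : Fin n → ℝ, gammaS S (dot a xstar) ≤ 1 := by
    intro a
    rw [gammaS]
    exact ENNReal.toReal_le_of_le_ofReal zero_le_one (by simpa using prob_le_one)
  have hγ_int : Integrable (fun a => gammaS S (dot a xstar)) (stdGaussianPi n) := by
    refine Integrable.mono' (integrable_const 1) hγ_meas.aestronglyMeasurable ?_
    exact Filter.Eventually.of_forall fun a => by
      rw [Real.norm_eq_abs, abs_of_nonneg (hγ_nonneg a)]; exact hγ_le_one a
  constructor
  · calc ∫ a, gammaS S (dot a xstar) ∂(stdGaussianPi n)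
        ≤ ∫ _a, (1:ℝ) ∂(stdGaussianPi n) :=
          integral_mono hγ_int (integrable_const 1) hγ_le_one
      _ = 1 := by simp
  · have hBmeas : MeasurableSet {p : (Fin n → ℝ) × ℝ | dot p.1 xstar + p.2 ∈ S} :=
      ((hdm.comp measurable_fst).add measurable_snd) hS
    rw [ofReal_integral_eq_lintegral_ofReal hγ_int
      (Filter.Eventually.of_forall hγ_nonneg)]
    rw [Measure.prod_apply hBmeas]
    apply le_of_eq
    refine lintegral_congr fun a => ?_
    have : Prod.mk a ⁻¹' {p : (Fin n → ℝ) × ℝ | dot p.1 xstar + p.2 ∈ S}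
        = {η | dot a xstar + η ∈ S} := rfl
    rw [this, gammaS, ← hF_eq (dot a xstar), ENNReal.ofReal_toReal (measure_ne_top _ _)]

lemma final_calc (α : ℝ) (hα : 0 < α) (hα1 : α ≤ 1) (m : ℕ) :
    (ENNReal.ofReal α ^ m)⁻¹ * (((5 ^ m : ℕ) : ℝ≥0∞) *
      (ENNReal.ofReal (Real.exp
          (-((4 * Real.sqrt (Real.log (5 * Real.sqrt 2 / α) + 1)) ^ 2 * m / 4 / 4)))
        * ENNReal.ofReal (Real.sqrt 2) ^ m))
      ≤ ENNReal.ofReal (Real.exp (-1 * m)) := by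
  set K := Real.log (5 * Real.sqrt 2 / α) + 1 with hKdef
  have hs2 : (1:ℝ) ≤ Real.sqrt 2 := by
    rw [show (1:ℝ) = Real.sqrt 1 by simp]
    exact Real.sqrt_le_sqrt (by norm_num)
  have hqpos : (0:ℝ) < 5 * Real.sqrt 2 / α := by positivity
  have hq1 : (1:ℝ) ≤ 5 * Real.sqrt 2 / α := by
    rw [le_div_iff₀ hα]
    nlinarith
  have hKpos : 0 < K := by
    have := Real.log_nonneg hq1
    rw [hKdef]; linarith
  have hT2 : (4 * Real.sqrt K) ^ 2 * (m:ℝ) / 4 / 4 = K * m := by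
    rw [mul_pow, Real.sq_sqrt hKpos.le]; ring
  rw [hT2]
  have h1 : (ENNReal.ofReal α ^ m)⁻¹ = ENNReal.ofReal ((α ^ m)⁻¹) := by
    rw [← ENNReal.ofReal_pow hα.le, ← ENNReal.ofReal_inv_of_pos (pow_pos hα m)]
  have h2 : ((5 ^ m : ℕ) : ℝ≥0∞) = ENNReal.ofReal ((5:ℝ) ^ m) := by
    rw [← ENNReal.ofReal_natCast (5 ^ m)]
    congr 1
    push_cast
    ring
  have h3 : ENNReal.ofReal (Real.sqrt 2) ^ m = ENNReal.ofReal (Real.sqrt 2 ^ m) :=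
    (ENNReal.ofReal_pow (Real.sqrt_nonneg 2) m).symm
  rw [h1, h2, h3, ← ENNReal.ofReal_mul (by positivity : (0:ℝ) ≤ Real.exp (-(K * m))),
    ← ENNReal.ofReal_mul (by positivity : (0:ℝ) ≤ (5:ℝ) ^ m),
    ← ENNReal.ofReal_mul (by positivity : (0:ℝ) ≤ (α ^ m)⁻¹)]
  apply ENNReal.ofReal_le_ofReal
  have hexpK : Real.exp (-(K * m)) = ((5 * Real.sqrt 2 / α)⁻¹ * Real.exp (-1)) ^ m := by
    rw [show -(K * (m:ℝ)) = (m:ℝ) * (-K) by ring, Real.exp_nat_mul]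
    congr 1
    rw [hKdef, show -(Real.log (5 * Real.sqrt 2 / α) + 1)
        = -Real.log (5 * Real.sqrt 2 / α) + (-1) by ring,
      Real.exp_add, Real.exp_neg, Real.exp_log hqpos]
  apply le_of_eq
  rw [hexpK, show -1 * (m:ℝ) = (m:ℝ) * (-1) by ring, Real.exp_nat_mul]
  rw [← inv_pow, ← mul_pow, ← mul_pow, ← mul_pow]
  congr 1
  have hsne : Real.sqrt 2 ≠ 0 := by positivity
  field_simp

/-- bound on the largest singular value of a column submatrix
(Lemma `upperisom`).  `s_max(A_V) > T√m` iff some `v` with `∑_{i∈V} v_i² ≤ 1`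
has `‖A_V v‖₂ > T√m`. -/
theorem truncated_gaussian_smax_bound (α : ℝ) (hα : 0 < α) :
    ∃ T c : ℝ, 0 < c ∧
      ∀ (n m : ℕ) (xstar : Fin n → ℝ) (S : Set ℝ),
        MeasurableSet S → CSP n xstar S α →
        ∀ V : Finset (Fin n), V.card ≤ m →
          dataMeasure m n xstar S
            {ω | ∃ v : Fin n → ℝ, (∑ i ∈ V, (v i) ^ 2) ≤ 1 ∧
              T * Real.sqrt m < Real.sqrt (∑ j, (∑ i ∈ V, mat ω j i * v i) ^ 2)}
            ≤ ENNReal.ofReal (Real.exp (-c * m)) := by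
  by_cases hα1 : α ≤ 1
  swap
  · -- vacuous case : `CSP` forces `α ≤ 1`
    refine ⟨0, 1, one_pos, ?_⟩
    intro n m xstar S hS hCSP V hV
    exfalso
    have h1 := (gammaS_facts n xstar S hS).1
    have h2 := hCSP
    rw [CSP] at h2
    linarith [not_le.1 hα1]
  · set K := Real.log (5 * Real.sqrt 2 / α) + 1 with hKdef
    set T := 4 * Real.sqrt K with hTdef
    have hT0 : 0 ≤ T := by positivity
    refine ⟨T, 1, one_pos, ?_⟩
    intro n m xstar S hS hCSP V hVm
    classical
    set B := {p : (Fin n → ℝ) × ℝ | dot p.1 xstar + p.2 ∈ S} with hBdef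
    have hdm : Measurable fun a : Fin n → ℝ => dot a xstar := by
      show Measurable fun a : Fin n → ℝ => ∑ i, a i * xstar i
      exact Finset.measurable_sum _ fun i _ => (measurable_pi_apply i).mul_const _
    have hBmeas : MeasurableSet B := ((hdm.comp measurable_fst).add measurable_snd) hS
    set s := {ω : Fin m → (Fin n → ℝ) × ℝ | ∀ j, dot (ω j).1 xstar + (ω j).2 ∈ S} with hsdef
    have hsmeas : MeasurableSet s := by
      have : s = ⋂ j, (fun ω : Fin m → (Fin n → ℝ) × ℝ => ω j) ⁻¹' B := by
        ext ω; simp [hsdef, hBdef]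
      rw [this]
      exact MeasurableSet.iInter fun j => (measurable_pi_apply j) hBmeas
    have hraws : (ENNReal.ofReal α) ^ m ≤ rawMeasure m n s := by
      have hpi : s = Set.pi Set.univ (fun _ : Fin m => B) := by
        ext ω; simp [hsdef, hBdef, Set.mem_pi]
      rw [hpi, rawMeasure, Measure.pi_pi, Finset.prod_const, Finset.card_univ,
        Fintype.card_fin]
      refine pow_le_pow_left' ?_ m
      calc ENNReal.ofReal α
          ≤ ENNReal.ofReal (∫ a, gammaS S (dot a xstar) ∂(stdGaussianPi n)) :=
            ENNReal.ofReal_le_ofReal hCSP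
        _ ≤ ((stdGaussianPi n).prod (gaussianReal 0 1)) B := (gammaS_facts n xstar S hS).2
    obtain ⟨N, hNb, hNcard, hNnet⟩ := exists_net ↥V
    -- the zero-extension of a vector on V
    set ext : EuclideanSpace ℝ ↥V → Fin n → ℝ :=
      fun u i => if h : i ∈ V then u ⟨i, h⟩ else 0 with hext
    have hext_sum : ∀ (u : EuclideanSpace ℝ ↥V) (a : Fin n → ℝ),
        ∑ i, a i * ext u i = ∑ i : ↥V, a i * u i := by
      intro u a
      have h1 : ∑ i ∈ Finset.univ, a i * ext u i = ∑ i ∈ V, a i * ext u i :=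
        (Finset.sum_subset (Finset.subset_univ V)
          (fun i _ hi => by simp [hext, dif_neg hi])).symm
      rw [h1, ← Finset.sum_coe_sort V (fun i => a i * ext u i)]
      exact Finset.sum_congr rfl fun i _ => by simp [hext, dif_pos i.2]
    have hext_sq : ∀ u : EuclideanSpace ℝ ↥V, u ∈ N → ∑ i, ext u i ^ 2 ≤ 1 := by
      intro u huN
      have h1 : ∑ i ∈ Finset.univ, ext u i ^ 2 = ∑ i ∈ V, ext u i ^ 2 :=
        (Finset.sum_subset (Finset.subset_univ V)
          (fun i _ hi => by simp [hext, dif_neg hi])).symm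
      have h2 : ∑ i ∈ V, ext u i ^ 2 = ∑ i : ↥V, u i ^ 2 := by
        rw [← Finset.sum_coe_sort V (fun i => ext u i ^ 2)]
        exact Finset.sum_congr rfl fun i _ => by simp [hext, dif_pos i.2]
      have h3 : ∑ i : ↥V, u i ^ 2 ≤ 1 := by
        have hn := hNb u huN
        have : ‖u‖ ^ 2 ≤ 1 := by nlinarith [norm_nonneg u]
        rw [EuclideanSpace.norm_eq, Real.sq_sqrt
          (Finset.sum_nonneg fun i _ => sq_nonneg _)] at this
        calc ∑ i : ↥V, u i ^ 2 = ∑ i : ↥V, ‖u i‖ ^ 2 := by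
              exact Finset.sum_congr rfl fun i _ => by rw [Real.norm_eq_abs, sq_abs]
          _ ≤ 1 := this
      rw [h1, h2]; exact h3
    -- inclusion into the union over the net
    have hsubset : {ω : Fin m → (Fin n → ℝ) × ℝ | ∃ v : Fin n → ℝ,
          (∑ i ∈ V, (v i) ^ 2) ≤ 1 ∧
          T * Real.sqrt m < Real.sqrt (∑ j, (∑ i ∈ V, mat ω j i * v i) ^ 2)}
        ⊆ ⋃ u ∈ N, {ω : Fin m → (Fin n → ℝ) × ℝ |
            T ^ 2 * m / 4 < ∑ j, (∑ i, (ω j).1 i * ext u i) ^ 2} := by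
      intro ω hω
      obtain ⟨v, hv1, hv2⟩ := hω
      obtain ⟨u, huN, hu⟩ := reduction (fun j => (ω j).1) V N hNnet
        (T * Real.sqrt m) (by positivity) v hv1 hv2
      refine Set.mem_biUnion huN ?_
      have heq : (T * Real.sqrt m / 2) ^ 2 = T ^ 2 * m / 4 := by
        rw [div_pow, mul_pow, Real.sq_sqrt (Nat.cast_nonneg m)]
        norm_num
      have hsum : ∀ j, ∑ i, (ω j).1 i * ext u i = ∑ i : ↥V, (ω j).1 i * u i :=
        fun j => hext_sum u ((ω j).1)
      simp only [Set.mem_setOf_eq]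
      rw [show (∑ j, (∑ i, (ω j).1 i * ext u i) ^ 2)
          = ∑ j, (∑ i : ↥V, (ω j).1 i * u i) ^ 2 from
        Finset.sum_congr rfl fun j _ => by rw [hsum j]]
      rw [← heq]
      exact hu
    -- assemble
    have hcard : ((N.card : ℕ) : ℝ≥0∞) ≤ ((5 ^ m : ℕ) : ℝ≥0∞) := by
      have : N.card ≤ 5 ^ m := by
        calc N.card ≤ 5 ^ Fintype.card ↥V := hNcard
          _ = 5 ^ V.card := by rw [Fintype.card_coe]
          _ ≤ 5 ^ m := Nat.pow_le_pow_right (by norm_num) hVm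
      exact_mod_cast this
    set bound : ℝ≥0∞ := ENNReal.ofReal (Real.exp (-(T ^ 2 * m / 4 / 4)))
      * ENNReal.ofReal (Real.sqrt 2) ^ m with hbound
    calc dataMeasure m n xstar S
          {ω | ∃ v : Fin n → ℝ, (∑ i ∈ V, (v i) ^ 2) ≤ 1 ∧
            T * Real.sqrt m < Real.sqrt (∑ j, (∑ i ∈ V, mat ω j i * v i) ^ 2)}
        = (rawMeasure m n s)⁻¹ * rawMeasure m n (s ∩
            {ω | ∃ v : Fin n → ℝ, (∑ i ∈ V, (v i) ^ 2) ≤ 1 ∧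
              T * Real.sqrt m < Real.sqrt (∑ j, (∑ i ∈ V, mat ω j i * v i) ^ 2)}) := by
          rw [dataMeasure]
          exact cond_apply hsmeas (rawMeasure m n) _
      _ ≤ (ENNReal.ofReal α ^ m)⁻¹ * rawMeasure m n
            {ω | ∃ v : Fin n → ℝ, (∑ i ∈ V, (v i) ^ 2) ≤ 1 ∧
              T * Real.sqrt m < Real.sqrt (∑ j, (∑ i ∈ V, mat ω j i * v i) ^ 2)} :=
          mul_le_mul' (ENNReal.inv_le_inv' hraws) (measure_mono Set.inter_subset_right)
      _ ≤ (ENNReal.ofReal α ^ m)⁻¹ * (((5 ^ m : ℕ) : ℝ≥0∞) * bound) := by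
          refine mul_le_mul_right ?_ _
          calc rawMeasure m n {ω | ∃ v : Fin n → ℝ, (∑ i ∈ V, (v i) ^ 2) ≤ 1 ∧
                T * Real.sqrt m < Real.sqrt (∑ j, (∑ i ∈ V, mat ω j i * v i) ^ 2)}
              ≤ rawMeasure m n (⋃ u ∈ N, {ω : Fin m → (Fin n → ℝ) × ℝ |
                  T ^ 2 * m / 4 < ∑ j, (∑ i, (ω j).1 i * ext u i) ^ 2}) :=
                measure_mono hsubset
            _ ≤ ∑ u ∈ N, rawMeasure m n {ω : Fin m → (Fin n → ℝ) × ℝ |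
                  T ^ 2 * m / 4 < ∑ j, (∑ i, (ω j).1 i * ext u i) ^ 2} :=
                measure_biUnion_finset_le N _
            _ ≤ ∑ _u ∈ N, bound := by
                refine Finset.sum_le_sum fun u huN => ?_
                exact chernoff m n (ext u) (hext_sq u huN) (T ^ 2 * m / 4)
            _ = (N.card : ℝ≥0∞) * bound := by
                rw [Finset.sum_const, nsmul_eq_mul]
            _ ≤ ((5 ^ m : ℕ) : ℝ≥0∞) * bound := mul_le_mul_left hcard bound
      _ ≤ ENNReal.ofReal (Real.exp (-1 * m)) := by
          rw [hbound]
          have := final_calc α hα hα1 m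
          rw [hKdef] at hTdef
          rw [hTdef]
          exact this
end
end

section
/- Let ε > 0 and let v ∈ ℝⁿ with ‖v‖₂ = 1. Let a ~ N(0, I_n) and let Z ~ N(0,1) be independent of a. If E_{a~N(0,I_n)}[Pr_Z[aᵀx* + Z ∈ S]] ≥ α, then Pr[ |aᵀv| < α·ε·√(π/2) | aᵀx* + Z ∈ S ] < ε. -/
open MeasureTheory ProbabilityTheory Real Filter Topology

noncomputable section

lemma pdf_conv (a b : NNReal) (ha : a ≠ 0) (hb : b ≠ 0) (y x : ℝ) :
    gaussianPDFReal 0 a x * gaussianPDFReal x b y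
      = gaussianPDFReal 0 (a + b) y * gaussianPDFReal ((a : ℝ) * y / ((a : ℝ) + b)) (a * b / (a + b)) x := by
  have ha' : (0:ℝ) < a := lt_of_le_of_ne a.coe_nonneg (by exact_mod_cast ha.symm)
  have hb' : (0:ℝ) < b := lt_of_le_of_ne b.coe_nonneg (by exact_mod_cast hb.symm)
  have hab : (0:ℝ) < (a:ℝ) + b := by linarith
  have hcoe : ((a * b / (a + b) : NNReal) : ℝ) = (a:ℝ) * b / ((a:ℝ) + b) := by push_cast; ring
  have hpi : (0:ℝ) < π := pi_pos
  simp only [gaussianPDFReal, NNReal.coe_add, hcoe, sub_zero]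
  rw [mul_mul_mul_comm, mul_mul_mul_comm ((√(2 * π * ((a:ℝ) + b)))⁻¹), ← Real.exp_add, ← Real.exp_add]
  congr 1
  · rw [← mul_inv, ← mul_inv, ← Real.sqrt_mul (by positivity), ← Real.sqrt_mul (by positivity)]
    congr 2
    field_simp
  · congr 1
    field_simp
    ring

lemma inner_int (a b : NNReal) (ha : a ≠ 0) (hb : b ≠ 0) (y : ℝ) :
    ∫⁻ x, gaussianPDF 0 a x * gaussianPDF x b y = gaussianPDF 0 (a + b) y := by
  have hv : a * b / (a + b) ≠ 0 := by
    have ha' : 0 < a := pos_iff_ne_zero.mpr ha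
    have hb' : 0 < b := pos_iff_ne_zero.mpr hb
    exact (div_pos (mul_pos ha' hb') (add_pos ha' hb')).ne'
  calc ∫⁻ x, gaussianPDF 0 a x * gaussianPDF x b y
      = ∫⁻ x, gaussianPDF 0 (a + b) y *
          gaussianPDF ((a : ℝ) * y / ((a : ℝ) + b)) (a * b / (a + b)) x := by
        congr 1; ext x
        rw [gaussianPDF, gaussianPDF, ← ENNReal.ofReal_mul (gaussianPDFReal_nonneg _ _ _),
          pdf_conv a b ha hb y x,
          ENNReal.ofReal_mul (gaussianPDFReal_nonneg _ _ _), ← gaussianPDF, ← gaussianPDF]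
    _ = gaussianPDF 0 (a + b) y * ∫⁻ x, gaussianPDF ((a : ℝ) * y / ((a : ℝ) + b)) (a * b / (a + b)) x :=
        lintegral_const_mul _ (measurable_gaussianPDF _ _)
    _ = gaussianPDF 0 (a + b) y := by rw [lintegral_gaussianPDF_eq_one _ hv, mul_one]

lemma gauss_conv (a b : NNReal) :
    ((gaussianReal 0 a).prod (gaussianReal 0 b)).map (fun p => p.1 + p.2)
      = gaussianReal 0 (a + b) := by
  have hmeas : Measurable fun p : ℝ × ℝ => p.1 + p.2 := measurable_fst.add measurable_snd
  rcases eq_or_ne a 0 with rfl | ha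
  · rw [gaussianReal_zero_var, Measure.dirac_prod, Measure.map_map hmeas measurable_prodMk_left]
    simp [Function.comp_def, zero_add]
  rcases eq_or_ne b 0 with rfl | hb
  · rw [gaussianReal_zero_var, Measure.prod_dirac, Measure.map_map hmeas measurable_prodMk_right]
    simp [Function.comp_def, add_zero]
  have hab : a + b ≠ 0 := by simp [ha]
  ext s hs
  rw [Measure.map_apply hmeas hs, Measure.prod_apply (hmeas hs)]
  have h1 : ∀ x : ℝ, gaussianReal 0 b (Prod.mk x ⁻¹' ((fun p : ℝ × ℝ => p.1 + p.2) ⁻¹' s))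
      = ∫⁻ y in s, gaussianPDF x b y := by
    intro x
    have : Prod.mk x ⁻¹' ((fun p : ℝ × ℝ => p.1 + p.2) ⁻¹' s) = (x + ·) ⁻¹' s := rfl
    rw [this, ← Measure.map_apply (measurable_const_add x) hs, gaussianReal_map_const_add,
      zero_add, gaussianReal_apply _ hb]
  simp_rw [h1]
  have hF : Measurable (Function.uncurry fun x y : ℝ => gaussianPDF x b y) := by
    simp only [Function.uncurry, gaussianPDF, gaussianPDFReal]
    apply Measurable.ennreal_ofReal
    fun_prop
  rw [gaussianReal_of_var_ne_zero _ ha,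
    lintegral_withDensity_eq_lintegral_mul _ (measurable_gaussianPDF _ _)
      (Measurable.lintegral_prod_right (ν := volume.restrict s) hF)]
  have h2 : ∀ x : ℝ, gaussianPDF 0 a x * ∫⁻ y in s, gaussianPDF x b y
        = ∫⁻ y in s, gaussianPDF 0 a x * gaussianPDF x b y := fun x =>
      (lintegral_const_mul _ (measurable_gaussianPDF _ _)).symm
  simp_rw [Pi.mul_apply, h2]
  rw [lintegral_lintegral_swap]
  · simp_rw [fun y => inner_int a b ha hb y]
    rw [gaussianReal_apply _ hab]
  · apply Measurable.aemeasurable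
    exact ((measurable_gaussianPDF 0 a).comp measurable_fst).mul hF

lemma measurable_dot {n : ℕ} (v : Fin n → ℝ) : Measurable fun a : Fin n → ℝ => dot a v := by
  unfold dot
  exact Finset.measurable_sum _ fun i _ => (measurable_pi_apply i).mul_const _

lemma map_dot_pi (n : ℕ) (v : Fin n → ℝ) :
    (stdGaussianPi n).map (fun a => dot a v)
      = gaussianReal 0 ⟨∑ i, (v i) ^ 2, by positivity⟩ := by
  induction n with
  | zero =>
    have h0 : (⟨∑ i : Fin 0, (v i) ^ 2, by positivity⟩ : NNReal) = 0 := by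
      ext; simp
    rw [h0]
    change _ = gaussianReal 0 (0 : NNReal)
    rw [gaussianReal_zero_var]
    have : (fun a : Fin 0 → ℝ => dot a v) = fun _ => (0 : ℝ) := by
      ext a; simp [dot]
    rw [this, Measure.map_const]
    have : IsProbabilityMeasure (stdGaussianPi 0) := by
      unfold stdGaussianPi; infer_instance
    simp
  | succ n ih =>
    have hmp := measurePreserving_piFinSuccAbove (fun _ : Fin (n+1) => gaussianReal 0 1) 0
    have hcomp : (fun a : Fin (n+1) → ℝ => dot a v)
        = (fun p : ℝ × (Fin n → ℝ) => v 0 * p.1 + dot p.2 (fun j => v j.succ))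
          ∘ (MeasurableEquiv.piFinSuccAbove (fun _ => ℝ) 0) := by
      ext a
      simp only [Function.comp_apply, MeasurableEquiv.piFinSuccAbove_apply, dot]
      rw [Fin.sum_univ_succ]
      simp [Fin.succAbove_zero, Fin.tail, mul_comm]
    have hM : Measurable (fun p : ℝ × (Fin n → ℝ) => v 0 * p.1 + dot p.2 (fun j => v j.succ)) :=
      (measurable_fst.const_mul _).add ((measurable_dot _).comp measurable_snd)
    rw [show stdGaussianPi (n+1) = Measure.pi fun _ => gaussianReal 0 1 from rfl, hcomp,
      ← Measure.map_map hM (MeasurableEquiv.piFinSuccAbove (fun _ => ℝ) 0).measurable,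
      hmp.map_eq]
    have hsplit : (fun p : ℝ × (Fin n → ℝ) => v 0 * p.1 + dot p.2 (fun j => v j.succ))
        = (fun q : ℝ × ℝ => q.1 + q.2)
          ∘ (Prod.map (fun x => v 0 * x) (fun a => dot a (fun j => v j.succ))) := by
      ext p; simp [Prod.map]
    rw [hsplit, ← Measure.map_map (show Measurable fun q : ℝ × ℝ => q.1 + q.2 from measurable_fst.add measurable_snd)
        (Measurable.prodMap (measurable_const_mul _) (measurable_dot _)),
      ← Measure.map_prod_map _ _ (measurable_const_mul _) (measurable_dot _)]
    rw [show Measure.pi (fun _ : Fin n => gaussianReal 0 1) = stdGaussianPi n from rfl, ih,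
      gaussianReal_map_const_mul, mul_zero]
    erw [gauss_conv]
    congr 1
    ext
    push_cast
    change (v 0 ^ 2 * 1 + ∑ i : Fin n, v i.succ ^ 2 : ℝ) = ∑ i, v i ^ 2
    rw [Fin.sum_univ_succ]
    ring

lemma gauss_interval (c : ℝ) (hc : 0 < c) :
    gaussianReal 0 1 {x : ℝ | |x| < c} < ENNReal.ofReal (2 * c / Real.sqrt (2 * π)) := by
  have hset : {x : ℝ | |x| < c} = Set.Ioo (-c) c := by
    ext x; simp [abs_lt]
  have hsq : (0:ℝ) < Real.sqrt (2 * π) := Real.sqrt_pos.mpr (by positivity)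
  rw [hset, gaussianReal_apply_eq_integral 0 one_ne_zero]
  rw [ENNReal.ofReal_lt_ofReal_iff (by positivity)]
  -- pointwise bound
  have hpdf : ∀ x : ℝ, gaussianPDFReal 0 1 x ≤ (Real.sqrt (2 * π))⁻¹ := by
    intro x
    simp only [gaussianPDFReal, NNReal.coe_one, mul_one, sub_zero]
    calc (√(2 * π))⁻¹ * rexp (-x ^ 2 / 2) ≤ (√(2 * π))⁻¹ * 1 := by
          gcongr
          exact Real.exp_le_one_iff.mpr (by nlinarith [sq_nonneg x])
      _ = (√(2 * π))⁻¹ := mul_one _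
  have hfin : volume (Set.Ioo (-c) c) < ⊤ := measure_Ioo_lt_top
  have hint1 : IntegrableOn (gaussianPDFReal 0 1) (Set.Ioo (-c) c) volume :=
    (integrable_gaussianPDFReal 0 1).integrableOn
  have hint2 : IntegrableOn (fun _ : ℝ => (Real.sqrt (2 * π))⁻¹) (Set.Ioo (-c) c) volume :=
    (integrableOn_const_iff).mpr (Or.inr hfin)
  have key : 0 < ∫ x in Set.Ioo (-c) c, ((Real.sqrt (2 * π))⁻¹ - gaussianPDFReal 0 1 x) := by
    have hsub : Set.Ioo (-c) c \ {0} ⊆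
        (Function.support fun x => (Real.sqrt (2 * π))⁻¹ - gaussianPDFReal 0 1 x)
          ∩ Set.Ioo (-c) c := by
      rintro x ⟨hx1, hx2⟩
      refine ⟨?_, hx1⟩
      simp only [Function.mem_support, ne_eq, sub_eq_zero]
      intro h
      have h1 : rexp (-x ^ 2 / 2) = 1 := by
        have h2 := h.symm
        simp only [gaussianPDFReal, NNReal.coe_one, mul_one, sub_zero] at h2
        have := mul_left_cancel₀ (inv_ne_zero hsq.ne') (h2.trans (mul_one _).symm)
        linarith [this]
      have hx0 : x ≠ 0 := fun h0 => hx2 (by simp [h0])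
      have h3 : -x ^ 2 / 2 = 0 := Real.exp_eq_exp.mp (by rw [Real.exp_zero]; exact h1)
      have : x ^ 2 = 0 := by linarith
      exact hx0 (pow_eq_zero_iff (n := 2) (by norm_num) |>.mp this)
    rw [setIntegral_pos_iff_support_of_nonneg_ae
      (ae_of_all _ fun x => sub_nonneg.mpr (hpdf x)) (hint2.sub hint1)]
    calc (0 : ENNReal) < volume (Set.Ioo (-c) c \ {0}) := by
          rw [measure_diff_null (measure_singleton 0), Real.volume_Ioo]
          simp only [ENNReal.ofReal_pos]
          linarith
      _ ≤ _ := measure_mono hsub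
  have hsplit : ∫ x in Set.Ioo (-c) c, ((Real.sqrt (2 * π))⁻¹ - gaussianPDFReal 0 1 x)
      = (∫ _ in Set.Ioo (-c) c, (Real.sqrt (2 * π))⁻¹) - ∫ x in Set.Ioo (-c) c, gaussianPDFReal 0 1 x :=
    integral_sub hint2 hint1
  have hconst : (∫ _ in Set.Ioo (-c) c, (Real.sqrt (2 * π))⁻¹) = 2 * c / Real.sqrt (2 * π) := by
    rw [setIntegral_const, measureReal_def, Real.volume_Ioo, ENNReal.toReal_ofReal (by linarith)]
    rw [smul_eq_mul]
    field_simp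
    ring
  rw [hsplit, hconst] at key
  linarith

set_option maxHeartbeats 1000000 in
instance stdGaussianPi_prob (n : ℕ) : IsProbabilityMeasure (stdGaussianPi n) := by
  unfold stdGaussianPi; infer_instance


set_option maxHeartbeats 1000000 in
/-- anti-concentration of `aᵀv` under truncation (Lemma `dplower`). -/
theorem truncated_dot_product_lower (n : ℕ) (xstar v : Fin n → ℝ) (S : Set ℝ)
    (hS : MeasurableSet S) (α ε : ℝ) (hα : 0 < α) (hε : 0 < ε)
    (hv : norm2 v = 1) (hCSP : CSP n xstar S α) :
    (((stdGaussianPi n).prod (gaussianReal 0 1))[|{p | dot p.1 xstar + p.2 ∈ S}])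
        {p | |dot p.1 v| < α * ε * Real.sqrt (Real.pi / 2)}
      < ENNReal.ofReal ε := by
  set μ := (stdGaussianPi n).prod (gaussianReal 0 1) with hμ
  set E : Set ((Fin n → ℝ) × ℝ) := {p | dot p.1 xstar + p.2 ∈ S} with hEdef
  set c : ℝ := α * ε * Real.sqrt (π / 2) with hcdef
  have hcpos : 0 < c := by
    have : 0 < Real.sqrt (π / 2) := Real.sqrt_pos.mpr (by positivity)
    positivity
  have hE : MeasurableSet E :=
    (((measurable_dot xstar).comp measurable_fst).add measurable_snd) hS
  -- Step A : ofReal α ≤ μ E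
  have hg : ∀ a : Fin n → ℝ, gaussianReal 0 1 (Prod.mk a ⁻¹' E) = gaussianReal (dot a xstar) 1 S := by
    intro a
    have hpre : Prod.mk a ⁻¹' E = (dot a xstar + ·) ⁻¹' S := rfl
    rw [hpre, ← Measure.map_apply (measurable_const_add _) hS, gaussianReal_map_const_add,
      zero_add]
  have hEA : ENNReal.ofReal α ≤ μ E := by
    have hμE : μ E = ∫⁻ a, gaussianReal 0 1 (Prod.mk a ⁻¹' E) ∂(stdGaussianPi n) :=
      Measure.prod_apply hE
    have hmg : Measurable fun a => gaussianReal 0 1 (Prod.mk a ⁻¹' E) :=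
      measurable_measure_prodMk_left hE
    have hint : ∫ a, gammaS S (dot a xstar) ∂(stdGaussianPi n)
        = (∫⁻ a, gaussianReal 0 1 (Prod.mk a ⁻¹' E) ∂(stdGaussianPi n)).toReal := by
      rw [← integral_toReal hmg.aemeasurable (ae_of_all _ fun a => measure_lt_top _ _)]
      congr 1
      ext a
      rw [hg a]; rfl
    have hα' : α ≤ (μ E).toReal := by rw [hμE, ← hint]; exact hCSP
    exact ENNReal.ofReal_le_of_le_toReal hα'
  have hEne : μ E ≠ 0 := by
    intro h
    rw [h] at hEA
    simp only [nonpos_iff_eq_zero, ENNReal.ofReal_eq_zero] at hEA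
    linarith
  -- Step B : μ B < ofReal (α * ε)
  set B : Set ((Fin n → ℝ) × ℝ) := {p | |dot p.1 v| < c} with hBdef
  have hIoo : MeasurableSet {x : ℝ | |x| < c} := by
    have : {x : ℝ | |x| < c} = Set.Ioo (-c) c := by ext x; simp [abs_lt]
    rw [this]; exact measurableSet_Ioo
  have hone : (⟨∑ i, (v i) ^ 2, by positivity⟩ : NNReal) = 1 := by
    ext
    have := Real.sqrt_eq_one.mp hv
    simpa using this
  have hmB : Measurable fun p : (Fin n → ℝ) × ℝ => dot p.1 v :=
    (measurable_dot v).comp measurable_fst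
  have hBval : μ B = gaussianReal 0 1 {x : ℝ | |x| < c} := by
    have h1 : B = (fun p : (Fin n → ℝ) × ℝ => dot p.1 v) ⁻¹' {x | |x| < c} := rfl
    rw [h1, ← Measure.map_apply hmB hIoo]
    have h3 : (fun p : (Fin n → ℝ) × ℝ => dot p.1 v) = (fun a => dot a v) ∘ Prod.fst := rfl
    have hfst : μ.map Prod.fst = stdGaussianPi n := by
      rw [hμ, Measure.map_fst_prod, measure_univ, one_smul]
    have h2 : μ.map (fun p : (Fin n → ℝ) × ℝ => dot p.1 v)
        = (μ.map Prod.fst).map (fun a => dot a v) := by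
      rw [h3]
      exact (Measure.map_map (measurable_dot v) measurable_fst).symm
    rw [h2, hfst, map_dot_pi, hone]
    rfl
  have hBbound : μ B < ENNReal.ofReal (α * ε) := by
    have heq : 2 * c / Real.sqrt (2 * π) = α * ε := by
      have h4 : Real.sqrt (2 * π) = 2 * Real.sqrt (π / 2) := by
        rw [show (2:ℝ) * π = 2^2 * (π/2) by ring, Real.sqrt_mul (by positivity),
          Real.sqrt_sq (by norm_num)]
      have hs : Real.sqrt (π / 2) ≠ 0 := (Real.sqrt_pos.mpr (by positivity)).ne'
      rw [hcdef, h4]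
      field_simp
    rw [hBval, ← heq]
    exact gauss_interval c hcpos
  -- combine
  rw [cond_apply hE]
  calc (μ E)⁻¹ * μ (E ∩ B)
      ≤ (ENNReal.ofReal α)⁻¹ * μ B :=
        mul_le_mul' (ENNReal.inv_le_inv.mpr hEA) (measure_mono Set.inter_subset_right)
    _ < (ENNReal.ofReal α)⁻¹ * ENNReal.ofReal (α * ε) := by
        refine ENNReal.mul_lt_mul_right (ENNReal.inv_ne_zero.mpr ENNReal.ofReal_ne_top)
          (ENNReal.inv_ne_top.mpr (by simpa using hα)) ?_
        exact hBbound
    _ = ENNReal.ofReal ε := by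
        rw [ENNReal.ofReal_mul hα.le, ← mul_assoc,
          ENNReal.inv_mul_cancel (by simpa using hα) ENNReal.ofReal_ne_top, one_mul]
end
end

section
/- For every A ∈ ℝ^{m×n} and y ∈ ℝ^m, the truncated negative log-likelihood nll(x; A, y) is twice differentiable in x, with gradient ∇nll(x; A, y) = (1/m)·Σ_{j=1}^m A_jᵀ·(E[Z_{A_j,x}] − y_j) and Hessian H(x; A, y) = (1/m)·Σ_{j=1}^m A_jᵀ A_j · Var(Z_{A_j,x}). -/
open MeasureTheory ProbabilityTheory Real Filter Topology

noncomputable section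

/-- The claimed gradient `∇nll(x;A,y) = (1/m) Σ_j A_jᵀ (E[Z_{A_j,x}] − y_j)`. -/
def gradNll (S : Set ℝ) {m n : ℕ} (A : Fin m → Fin n → ℝ) (y : Fin m → ℝ)
    (x : Fin n → ℝ) : Fin n → ℝ :=
  fun i => (1 / (m : ℝ)) * ∑ j, A j i * (truncMean S (dot (A j) x) - y j)

/-- The claimed Hessian `H(x;A,y) = (1/m) Σ_j A_jᵀ A_j Var(Z_{A_j,x})`. -/
def hessNll (S : Set ℝ) {m n : ℕ} (A : Fin m → Fin n → ℝ) (x : Fin n → ℝ) :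
    Matrix (Fin n) (Fin n) ℝ :=
  Matrix.of fun i i' => (1 / (m : ℝ)) * ∑ j, A j i * A j i' * truncVar S (dot (A j) x)

section NllAuxProof
open Metric
open scoped ENNReal NNReal

lemma intAbs {b : ℝ} (hb : 0 < b) (k : ℕ) :
    Integrable (fun x : ℝ => |x| ^ k * Real.exp (-b * x ^ 2)) := by
  have h := integrable_rpow_mul_exp_neg_mul_sq hb (s := (k : ℝ))
    (by have := Nat.cast_nonneg (α := ℝ) k; linarith)
  have h' : Integrable (fun x : ℝ => x ^ k * Real.exp (-b * x ^ 2)) := by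
    simpa [Real.rpow_natCast] using h
  have := h'.abs
  refine this.congr ?_
  filter_upwards with x
  rw [abs_mul, abs_pow, abs_of_nonneg (Real.exp_nonneg _)]

lemma intOnePlus {b : ℝ} (hb : 0 < b) (k : ℕ) :
    Integrable (fun x : ℝ => (1 + |x|) ^ k * Real.exp (-b * x ^ 2)) := by
  have : (fun x : ℝ => (1 + |x|) ^ k * Real.exp (-b * x ^ 2)) =
      fun x : ℝ => ∑ j ∈ Finset.range (k + 1),
        (k.choose j : ℝ) * (|x| ^ (k - j) * Real.exp (-b * x ^ 2)) := by
    funext x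
    rw [add_pow, Finset.sum_mul]
    refine Finset.sum_congr rfl fun j hj => ?_
    ring
  rw [this]
  exact integrable_finset_sum _ fun j _ => ((intAbs hb (k - j)).const_mul _)

lemma intShift {b : ℝ} (hb : 0 < b) (t : ℝ) (k : ℕ) :
    Integrable (fun z : ℝ => |z| ^ k * Real.exp (-b * (z - t) ^ 2)) := by
  have hg : Integrable (fun u : ℝ => |u + t| ^ k * Real.exp (-b * u ^ 2)) := by
    refine ((intOnePlus hb k).const_mul ((1 + |t|) ^ k)).mono' ?_ ?_
    · exact (((continuous_abs.comp (continuous_id.add continuous_const)).pow k).mul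
        (Real.continuous_exp.comp (continuous_const.mul (continuous_pow 2)))).aestronglyMeasurable
    · filter_upwards with u
      have h1 : |u + t| ≤ (1 + |t|) * (1 + |u|) := by
        have := abs_add_le u t
        have h2 : (0:ℝ) ≤ |t| * |u| := by positivity
        nlinarith [abs_nonneg u, abs_nonneg t]
      have h3 : |u + t| ^ k ≤ ((1 + |t|) * (1 + |u|)) ^ k :=
        pow_le_pow_left₀ (abs_nonneg _) h1 k
      rw [Real.norm_eq_abs, abs_mul, abs_pow, abs_abs,
        abs_of_nonneg (Real.exp_nonneg _)]
      calc |u + t| ^ k * Real.exp (-b * u ^ 2)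
          ≤ ((1 + |t|) * (1 + |u|)) ^ k * Real.exp (-b * u ^ 2) := by
            exact mul_le_mul_of_nonneg_right h3 (Real.exp_nonneg _)
        _ = (1 + |t|) ^ k * ((1 + |u|) ^ k * Real.exp (-b * u ^ 2)) := by rw [mul_pow]; ring
  have := hg.comp_sub_right t
  refine this.congr ?_
  filter_upwards with z
  simp [sub_add_cancel]

lemma exp_arg_eq (t z : ℝ) : Real.exp (-(t - z) ^ 2 / 2) =
    Real.exp (-(2⁻¹ : ℝ) * (z - t) ^ 2) := by ring_nf

lemma intOn (S : Set ℝ) (t : ℝ) (k : ℕ) :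
    IntegrableOn (fun z => z ^ k * Real.exp (-(t - z) ^ 2 / 2)) S := by
  refine (((intShift (by norm_num : (0:ℝ) < 2⁻¹) t k).restrict (s := S)).mono' ?_ ?_)
  · exact ((continuous_pow k).mul
      ((Real.continuous_exp.comp (by continuity)))).aestronglyMeasurable
  · filter_upwards with z
    rw [Real.norm_eq_abs, abs_mul, abs_pow, abs_of_nonneg (Real.exp_nonneg _),
      exp_arg_eq]

lemma contMeas (S : Set ℝ) {f : ℝ → ℝ} (hf : Continuous f) :
    AEStronglyMeasurable f (volume.restrict S) :=
  hf.aestronglyMeasurable.restrict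

lemma hasDerivAt_intS (S : Set ℝ) (k : ℕ) (t₀ : ℝ) :
    HasDerivAt (fun t => ∫ z in S, z ^ k * Real.exp (-(t - z) ^ 2 / 2))
      (∫ z in S, z ^ k * (z - t₀) * Real.exp (-(t₀ - z) ^ 2 / 2)) t₀ := by
  have key := hasDerivAt_integral_of_dominated_loc_of_deriv_le
    (μ := volume.restrict S)
    (F := fun t z => z ^ k * Real.exp (-(t - z) ^ 2 / 2))
    (F' := fun t z => z ^ k * (z - t) * Real.exp (-(t - z) ^ 2 / 2))
    (x₀ := t₀)
    (bound := fun z => Real.exp 1 *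
      (|z| ^ (k+1) * Real.exp (-(4⁻¹:ℝ) * (z - t₀) ^ 2)
        + (|t₀| + 1) * (|z| ^ k * Real.exp (-(4⁻¹:ℝ) * (z - t₀) ^ 2))))
    (s := Metric.ball t₀ 1) (Metric.ball_mem_nhds t₀ one_pos)
    (Eventually.of_forall fun x => contMeas S (by continuity))
    (intOn S t₀ k)
    (contMeas S (by continuity))
    ?_ ?_ ?_
  · exact key.2
  · -- bound
    filter_upwards with z
    intro x hx
    have hx1 : |x - t₀| < 1 := by simpa [Real.dist_eq] using hx
    have hexp : Real.exp (-(x - z) ^ 2 / 2) ≤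
        Real.exp 1 * Real.exp (-(4⁻¹:ℝ) * (z - t₀) ^ 2) := by
      rw [← Real.exp_add]
      apply Real.exp_le_exp.2
      nlinarith [sq_nonneg (t₀ - z + 2*(x - t₀)), sq_nonneg (x - t₀), abs_nonneg (x - t₀),
        sq_abs (x - t₀), (abs_le.1 hx1.le).1, (abs_le.1 hx1.le).2]
    have hzx : |z - x| ≤ |z| + (|t₀| + 1) := by
      calc |z - x| ≤ |z| + |x| := abs_sub z x
        _ ≤ |z| + (|t₀| + 1) := by
          have : |x| ≤ |t₀| + |x - t₀| := by
            have := abs_add_le (x - t₀) t₀; simpa [sub_add_cancel, add_comm] using this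
          linarith
    rw [Real.norm_eq_abs, abs_mul, abs_mul, abs_pow, abs_of_nonneg (Real.exp_nonneg _)]
    have h1 : |z| ^ k * |z - x| ≤ |z| ^ (k+1) + (|t₀| + 1) * |z| ^ k := by
      calc |z| ^ k * |z - x| ≤ |z| ^ k * (|z| + (|t₀| + 1)) :=
            mul_le_mul_of_nonneg_left hzx (by positivity)
        _ = |z| ^ (k+1) + (|t₀| + 1) * |z| ^ k := by ring
    calc |z| ^ k * |z - x| * Real.exp (-(x - z) ^ 2 / 2)
        ≤ (|z| ^ (k+1) + (|t₀| + 1) * |z| ^ k) *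
          (Real.exp 1 * Real.exp (-(4⁻¹:ℝ) * (z - t₀) ^ 2)) := by
          apply mul_le_mul h1 hexp (Real.exp_nonneg _) (by positivity)
      _ = Real.exp 1 * (|z| ^ (k+1) * Real.exp (-(4⁻¹:ℝ) * (z - t₀) ^ 2)
            + (|t₀| + 1) * (|z| ^ k * Real.exp (-(4⁻¹:ℝ) * (z - t₀) ^ 2))) := by ring
  · -- bound integrable
    exact (((intShift (by norm_num : (0:ℝ) < 4⁻¹) t₀ (k+1)).add
      ((intShift (by norm_num : (0:ℝ) < 4⁻¹) t₀ k).const_mul _)).const_mul _).restrict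
  · -- differentiability
    filter_upwards with z
    intro x _
    have h1 : HasDerivAt (fun t : ℝ => -(t - z) ^ 2 / 2) (-(x - z)) x := by
      have : HasDerivAt (fun t : ℝ => t - z) 1 x := (hasDerivAt_id x).sub_const z
      have h2 := (this.pow 2).neg.div_const 2
      refine h2.congr_deriv ?_; ring
    have h3 := (h1.exp).const_mul (z ^ k)
    refine h3.congr_deriv ?_
    ring

lemma pdf_eq (t z : ℝ) : gaussianPDFReal t 1 z =
    (Real.sqrt (2 * π))⁻¹ * Real.exp (-(t - z) ^ 2 / 2) := by
  simp only [gaussianPDFReal, NNReal.coe_one, mul_one]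
  congr 2
  ring

lemma setIntegral_gauss (S : Set ℝ) (hS : MeasurableSet S) (t : ℝ) (f : ℝ → ℝ) :
    ∫ z in S, f z ∂(gaussianReal t 1) =
      (Real.sqrt (2 * π))⁻¹ * ∫ z in S, f z * Real.exp (-(t - z) ^ 2 / 2) := by
  rw [gaussianReal_of_var_ne_zero t one_ne_zero]
  rw [show (gaussianPDF t 1) = fun z => ((gaussianPDFReal t 1 z).toNNReal : ℝ≥0∞) from rfl,
    setIntegral_withDensity_eq_setIntegral_smul
    ((measurable_gaussianPDFReal t 1).real_toNNReal) f hS]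
  rw [← integral_const_mul]
  refine setIntegral_congr_fun hS fun z _ => ?_
  have h0 : (0:ℝ) ≤ gaussianPDFReal t 1 z := gaussianPDFReal_nonneg t 1 z
  rw [NNReal.smul_def, smul_eq_mul, Real.coe_toNNReal _ h0, pdf_eq]
  ring

lemma gauss_measure_S (S : Set ℝ) (hS : MeasurableSet S) (t : ℝ) :
    gaussianReal t 1 S =
      ENNReal.ofReal ((Real.sqrt (2 * π))⁻¹ * ∫ z in S, Real.exp (-(t - z) ^ 2 / 2)) := by
  rw [gaussianReal_apply_eq_integral t one_ne_zero S]
  congr 1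
  rw [← integral_const_mul]
  refine setIntegral_congr_fun hS fun z _ => ?_
  rw [pdf_eq]

lemma trunc_integral (S : Set ℝ) (hS : MeasurableSet S)
    (hpos : ∀ t : ℝ, 0 < ∫ z in S, Real.exp (-(t - z) ^ 2 / 2)) (t : ℝ) (f : ℝ → ℝ) :
    ∫ z, f z ∂(truncNormal S t) =
      (∫ z in S, Real.exp (-(t - z) ^ 2 / 2))⁻¹ *
        ∫ z in S, f z * Real.exp (-(t - z) ^ 2 / 2) := by
  have hsq : (0:ℝ) < Real.sqrt (2 * π) := Real.sqrt_pos.2 (by positivity)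
  have hD := hpos t
  rw [truncNormal, ProbabilityTheory.cond, integral_smul_measure,
    gauss_measure_S S hS t, ← ENNReal.ofReal_inv_of_pos (by positivity),
    ENNReal.toReal_ofReal (by positivity), setIntegral_gauss S hS t f, smul_eq_mul,
    mul_inv, inv_inv]
  field_simp

variable {S : Set ℝ}

lemma gaussS_ne_zero (hS : MeasurableSet S)
    (hpos : ∀ t : ℝ, 0 < ∫ z in S, Real.exp (-(t - z) ^ 2 / 2)) (t : ℝ) :
    gaussianReal t 1 S ≠ 0 := by
  rw [gauss_measure_S S hS t]
  have hsq : (0:ℝ) < Real.sqrt (2 * π) := Real.sqrt_pos.2 (by positivity)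
  have hD := hpos t
  exact (ENNReal.ofReal_pos.2 (by positivity)).ne'

lemma truncNormal_prob (hS : MeasurableSet S)
    (hpos : ∀ t : ℝ, 0 < ∫ z in S, Real.exp (-(t - z) ^ 2 / 2)) (t : ℝ) :
    IsProbabilityMeasure (truncNormal S t) :=
  cond_isProbabilityMeasure (gaussS_ne_zero hS hpos t)

lemma integrable_sq_trunc (hS : MeasurableSet S)
    (hpos : ∀ t : ℝ, 0 < ∫ z in S, Real.exp (-(t - z) ^ 2 / 2)) (t : ℝ) :
    Integrable (fun z => z ^ 2) (truncNormal S t) := by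
  rw [truncNormal, ProbabilityTheory.cond,
    integrable_smul_measure (by simp [measure_ne_top]) (by simp [gaussS_ne_zero hS hpos t]),
    gaussianReal_of_var_ne_zero t one_ne_zero, restrict_withDensity hS]
  refine (integrable_withDensity_iff (measurable_gaussianPDF t 1)
      (Eventually.of_forall fun z => ENNReal.ofReal_lt_top)).2 ?_
  refine ((intOn S t 2).const_mul ((Real.sqrt (2 * π))⁻¹)).congr ?_
  filter_upwards with z
  rw [gaussianPDF_def, ENNReal.toReal_ofReal (gaussianPDFReal_nonneg t 1 z), pdf_eq]
  ring

lemma truncMean_eq (hS : MeasurableSet S)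
    (hpos : ∀ t : ℝ, 0 < ∫ z in S, Real.exp (-(t - z) ^ 2 / 2)) (t : ℝ) :
    truncMean S t = (∫ z in S, z * Real.exp (-(t - z) ^ 2 / 2)) /
      (∫ z in S, Real.exp (-(t - z) ^ 2 / 2)) := by
  rw [truncMean, trunc_integral S hS hpos t _, div_eq_inv_mul]

lemma truncVar_eq (hS : MeasurableSet S)
    (hpos : ∀ t : ℝ, 0 < ∫ z in S, Real.exp (-(t - z) ^ 2 / 2)) (t : ℝ) :
    truncVar S t = (∫ z in S, z ^ 2 * Real.exp (-(t - z) ^ 2 / 2)) /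
        (∫ z in S, Real.exp (-(t - z) ^ 2 / 2))
      - ((∫ z in S, z * Real.exp (-(t - z) ^ 2 / 2)) /
        (∫ z in S, Real.exp (-(t - z) ^ 2 / 2))) ^ 2 := by
  have := truncNormal_prob hS hpos t
  have hmem : MemLp (id : ℝ → ℝ) 2 (truncNormal S t) :=
    (memLp_two_iff_integrable_sq aestronglyMeasurable_id).2
      (by simpa using integrable_sq_trunc hS hpos t)
  rw [truncVar, variance_eq_sub hmem]
  have h1 : ∫ z, (id ^ 2 : ℝ → ℝ) z ∂(truncNormal S t) = ∫ z, z ^ 2 ∂(truncNormal S t) := by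
    simp [Pi.pow_apply]
  have h2 : ∫ z, (id : ℝ → ℝ) z ∂(truncNormal S t) = truncMean S t := rfl
  rw [h1, h2, trunc_integral S hS hpos t (fun z => z ^ 2), truncMean_eq hS hpos t]
  ring

lemma deriv_split (S : Set ℝ) (t : ℝ) (k : ℕ) :
    ∫ z in S, z ^ k * (z - t) * Real.exp (-(t - z) ^ 2 / 2)
      = (∫ z in S, z ^ (k+1) * Real.exp (-(t - z) ^ 2 / 2))
        - t * ∫ z in S, z ^ k * Real.exp (-(t - z) ^ 2 / 2) := by
  rw [← integral_const_mul, ← integral_sub (intOn S t (k+1)) ((intOn S t k).const_mul t)]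
  refine integral_congr_ae (Eventually.of_forall fun z => ?_)
  ring

lemma hasDerivAt_D (t : ℝ) :
    HasDerivAt (fun t => ∫ z in S, Real.exp (-(t - z) ^ 2 / 2))
      ((∫ z in S, z * Real.exp (-(t - z) ^ 2 / 2))
        - t * ∫ z in S, Real.exp (-(t - z) ^ 2 / 2)) t := by
  have h := hasDerivAt_intS S 0 t
  rw [deriv_split S t 0] at h
  simpa using h

lemma hasDerivAt_N (t : ℝ) :
    HasDerivAt (fun t => ∫ z in S, z * Real.exp (-(t - z) ^ 2 / 2))
      ((∫ z in S, z ^ 2 * Real.exp (-(t - z) ^ 2 / 2))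
        - t * ∫ z in S, z * Real.exp (-(t - z) ^ 2 / 2)) t := by
  have h := hasDerivAt_intS S 1 t
  rw [deriv_split S t 1] at h
  simpa using h

lemma hasDerivAt_g (hS : MeasurableSet S)
    (hpos : ∀ t : ℝ, 0 < ∫ z in S, Real.exp (-(t - z) ^ 2 / 2)) (y t : ℝ) :
    HasDerivAt (fun t => (t - y) ^ 2 / 2 + Real.log (∫ z in S, Real.exp (-(t - z) ^ 2 / 2)))
      (truncMean S t - y) t := by
  set D := ∫ z in S, Real.exp (-(t - z) ^ 2 / 2) with hD
  set N := ∫ z in S, z * Real.exp (-(t - z) ^ 2 / 2) with hN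
  have hDpos := hpos t
  have h1 : HasDerivAt (fun t : ℝ => (t - y) ^ 2 / 2) (t - y) t := by
    have := (((hasDerivAt_id t).sub_const y).pow 2).div_const 2
    refine this.congr_deriv ?_
    simp only [id_eq, pow_one, Nat.cast_ofNat]
    ring
  have h2 := (hasDerivAt_D (S := S) t).log (ne_of_gt hDpos)
  have h3 := h1.add h2
  refine h3.congr_deriv ?_
  rw [truncMean_eq hS hpos t, ← hD, ← hN]
  have hD0 : D ≠ 0 := ne_of_gt hDpos
  field_simp
  ring

lemma hasDerivAt_truncMean (hS : MeasurableSet S)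
    (hpos : ∀ t : ℝ, 0 < ∫ z in S, Real.exp (-(t - z) ^ 2 / 2)) (t : ℝ) :
    HasDerivAt (fun t => truncMean S t) (truncVar S t) t := by
  have heq : (fun t => truncMean S t) = fun t =>
      (∫ z in S, z * Real.exp (-(t - z) ^ 2 / 2)) /
      (∫ z in S, Real.exp (-(t - z) ^ 2 / 2)) := funext fun t => truncMean_eq hS hpos t
  rw [heq]
  have hDpos := hpos t
  have h := (hasDerivAt_N (S := S) t).div (hasDerivAt_D (S := S) t) (ne_of_gt hDpos)
  refine h.congr_deriv ?_
  rw [truncVar_eq hS hpos t]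
  set D := ∫ z in S, Real.exp (-(t - z) ^ 2 / 2)
  set N := ∫ z in S, z * Real.exp (-(t - z) ^ 2 / 2)
  set M := ∫ z in S, z ^ 2 * Real.exp (-(t - z) ^ 2 / 2)
  field_simp
  ring

end NllAuxProof

/-- gradient and Hessian of the truncated negative log-likelihood
(Lemma `gradient`).  The first conjunct states differentiability with the claimed
gradient; the second states differentiability of the gradient map with the claimed
Hessian as its derivative (hence `nll` is twice differentiable). -/

theorem nll_gradient_hessian {m n : ℕ} (S : Set ℝ) (hS : MeasurableSet S)
    (hpos : ∀ t : ℝ, 0 < ∫ z in S, Real.exp (-(t - z) ^ 2 / 2))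
    (A : Fin m → Fin n → ℝ) (y : Fin m → ℝ) (x : Fin n → ℝ) :
    HasFDerivAt (nll S A y)
      (∑ i, gradNll S A y x i •
        (ContinuousLinearMap.proj i : (Fin n → ℝ) →L[ℝ] ℝ)) x ∧
    HasFDerivAt (fun x' => gradNll S A y x')
      (LinearMap.toContinuousLinearMap (Matrix.mulVecLin (hessNll S A x))) x := by
  set L : Fin m → (Fin n → ℝ) →L[ℝ] ℝ :=
    fun j => ∑ i, A j i • (ContinuousLinearMap.proj i : (Fin n → ℝ) →L[ℝ] ℝ) with hLdef
  have hL : ∀ j (v : Fin n → ℝ), L j v = dot (A j) v := by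
    intro j v
    simp [hLdef, dot, ContinuousLinearMap.sum_apply, ContinuousLinearMap.smul_apply,
      ContinuousLinearMap.proj_apply]
  constructor
  · -- gradient
    have hterm : ∀ j : Fin m, HasFDerivAt
        (fun x' => (dot (A j) x' - y j) ^ 2 / 2
          + Real.log (∫ z in S, Real.exp (-(dot (A j) x' - z) ^ 2 / 2)))
        ((truncMean S (dot (A j) x) - y j) • L j) x := by
      intro j
      have hcomp := (hasDerivAt_g hS hpos (y j) (L j x)).comp_hasFDerivAt x (L j).hasFDerivAt
      have heq : (fun x' => (dot (A j) x' - y j) ^ 2 / 2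
          + Real.log (∫ z in S, Real.exp (-(dot (A j) x' - z) ^ 2 / 2)))
          = (fun t => (t - y j) ^ 2 / 2
            + Real.log (∫ z in S, Real.exp (-(t - z) ^ 2 / 2))) ∘ (L j) := by
        funext x'; simp [hL, Function.comp]
      rw [heq, ← hL j x]
      exact hcomp
    have hsum := HasFDerivAt.fun_sum (fun j (_ : j ∈ Finset.univ) => hterm j)
    have hfull := hsum.const_mul (1 / (m : ℝ))
    have hfun : (fun x' => (1 / (m : ℝ)) * ∑ j, ((dot (A j) x' - y j) ^ 2 / 2
        + Real.log (∫ z in S, Real.exp (-(dot (A j) x' - z) ^ 2 / 2)))) = nll S A y := rfl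
    rw [hfun] at hfull
    refine hfull.congr_fderiv (Eq.symm ?_)
    ext v
    simp only [ContinuousLinearMap.coe_smul', Pi.smul_apply, ContinuousLinearMap.coe_sum',
      Finset.sum_apply, ContinuousLinearMap.smul_apply, ContinuousLinearMap.proj_apply,
      smul_eq_mul, gradNll, hL]
    simp only [dot, Finset.mul_sum, Finset.sum_mul]
    rw [Finset.sum_comm]
    refine Finset.sum_congr rfl fun j _ => Finset.sum_congr rfl fun i _ => by ring
  · -- hessian
    refine hasFDerivAt_pi'' fun i => ?_
    have hterm : ∀ j : Fin m, HasFDerivAt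
        (fun x' => A j i * (truncMean S (dot (A j) x') - y j))
        (A j i • (truncVar S (dot (A j) x) • L j)) x := by
      intro j
      have hd := ((hasDerivAt_truncMean hS hpos (L j x)).sub_const (y j)).comp_hasFDerivAt
        x (L j).hasFDerivAt
      have heq : (fun x' => truncMean S (dot (A j) x') - y j)
          = (fun t => truncMean S t - y j) ∘ (L j) := by
        funext x'; simp [hL, Function.comp]
      have h2 : HasFDerivAt (fun x' => truncMean S (dot (A j) x') - y j)
          (truncVar S (dot (A j) x) • L j) x := by
        rw [heq, ← hL j x]; exact hd
      exact h2.const_mul (A j i)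
    have hsum := (HasFDerivAt.fun_sum (fun j (_ : j ∈ Finset.univ) => hterm j)).const_mul
      (1 / (m : ℝ))
    have hfun : (fun x' => (1 / (m : ℝ)) * ∑ j, A j i * (truncMean S (dot (A j) x') - y j))
        = fun x' => gradNll S A y x' i := rfl
    rw [hfun] at hsum
    refine hsum.congr_fderiv (Eq.symm ?_)
    ext v
    simp only [ContinuousLinearMap.coe_comp', Function.comp_apply,
      ContinuousLinearMap.coe_smul', Pi.smul_apply, ContinuousLinearMap.coe_sum',
      Finset.sum_apply, ContinuousLinearMap.smul_apply, ContinuousLinearMap.proj_apply,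
      smul_eq_mul, LinearMap.coe_toContinuousLinearMap', Matrix.mulVecLin_apply,
      Matrix.mulVec, dotProduct, hessNll, Matrix.of_apply, hL]
    simp only [dot, Finset.mul_sum, Finset.sum_mul]
    rw [Finset.sum_comm]
    refine Finset.sum_congr rfl fun j _ => Finset.sum_congr rfl fun i' _ => by ring
end
end

section
/- Fix A ∈ ℝ^{m×n}, y ∈ ℝ^m, λ > 0 and a set U ⊆ [n]. Let x̆ be an optimal solution of the restricted program min { nll(x; A, y) + λ‖x‖₁ : x ∈ ℝⁿ, supp(x) ⊆ U }. (a) There exists z̆_U ∈ ℝ^U with ‖z̆_U‖_∞ ≤ 1 such that −λ·z̆_U = (1/m)·A_Uᵀ·(E[Z_{A,x̆}] − y). (b) Extend z̆ to ℝⁿ by defining −λ·z̆_{U^c} = (1/m)·A_{U^c}ᵀ·(E[Z_{A,x̆}] − y). If ‖z̆_{U^c}‖_∞ < 1 and A_Uᵀ A_U is invertible, then x̆ is the unique optimal solution of the unrestricted program min_{x ∈ ℝⁿ} nll(x; A, y) + λ‖x‖₁. -/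
open MeasureTheory ProbabilityTheory Real Filter Topology

noncomputable section

open scoped ENNReal NNReal

namespace PDW


/-- moment integrals of the tilted kernel -/
def P (S : Set ℝ) (n : ℕ) (t : ℝ) : ℝ := ∫ z in S, z ^ n * Real.exp (t * z - z ^ 2 / 2)

lemma cont_aux (n : ℕ) (c : ℝ) : Continuous (fun z : ℝ => z ^ n * Real.exp (c * z - z ^ 2 / 2)) := by
  fun_prop

lemma integrable_pow_kernel (n : ℕ) (c : ℝ) :
    Integrable (fun z : ℝ => |z| ^ n * Real.exp (c * |z| - z ^ 2 / 2)) := by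
  have h4 : (0:ℝ) < 4⁻¹ := by norm_num
  have hs : (-1:ℝ) < (n:ℝ) := lt_of_lt_of_le (by norm_num) (Nat.cast_nonneg n)
  have base : Integrable (fun z : ℝ => z ^ n * Real.exp (-(4⁻¹:ℝ) * z ^ 2)) := by
    have h := integrable_rpow_mul_exp_neg_mul_sq h4 hs
    simpa [Real.rpow_natCast] using h
  have babs : Integrable (fun z : ℝ => |z| ^ n * Real.exp (-(4⁻¹:ℝ) * z ^ 2)) := by
    have h := base.abs
    simpa [abs_mul, abs_pow, abs_of_pos (Real.exp_pos _)] using h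
  refine (babs.const_mul (Real.exp (c ^ 2))).mono' ?_ ?_
  · exact ((continuous_abs.pow n).mul
      (((continuous_const.mul continuous_abs).sub
        ((continuous_pow 2).div_const 2)).rexp)).aestronglyMeasurable
  · filter_upwards with z
    rw [Real.norm_eq_abs, abs_of_nonneg (by positivity)]
    have h1 : c * |z| - z ^ 2 / 2 ≤ c ^ 2 + (-(4⁻¹:ℝ) * z ^ 2) := by
      nlinarith [sq_nonneg (c - |z| / 2), sq_abs z]
    calc |z| ^ n * Real.exp (c * |z| - z ^ 2 / 2)
        ≤ |z| ^ n * Real.exp (c ^ 2 + (-(4⁻¹:ℝ) * z ^ 2)) := by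
          gcongr
      _ = Real.exp (c ^ 2) * (|z| ^ n * Real.exp (-(4⁻¹:ℝ) * z ^ 2)) := by
          rw [Real.exp_add]; ring

lemma integrableOn_pk (S : Set ℝ) (n : ℕ) (t : ℝ) :
    IntegrableOn (fun z : ℝ => z ^ n * Real.exp (t * z - z ^ 2 / 2)) S := by
  refine ((integrable_pow_kernel n |t|).mono' (cont_aux n t).aestronglyMeasurable ?_).integrableOn
  filter_upwards with z
  rw [Real.norm_eq_abs, abs_mul, abs_pow, abs_of_pos (Real.exp_pos _)]
  have htz : t * z ≤ |t| * |z| := (le_abs_self _).trans (le_of_eq (abs_mul _ _))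
  exact mul_le_mul_of_nonneg_left (Real.exp_le_exp.2 (by linarith)) (by positivity)

lemma decomp (S : Set ℝ) (t : ℝ) :
    (∫ z in S, Real.exp (-(t - z) ^ 2 / 2)) = Real.exp (-t ^ 2 / 2) * P S 0 t := by
  rw [P, ← integral_const_mul]
  congr 1
  funext z
  rw [pow_zero, one_mul, ← Real.exp_add]
  congr 1
  ring

lemma P_pos {S : Set ℝ} (hpos : ∀ t : ℝ, 0 < ∫ z in S, Real.exp (-(t - z) ^ 2 / 2)) (t : ℝ) :
    0 < P S 0 t := by
  have h := hpos t
  rw [decomp] at h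
  nlinarith [Real.exp_pos (-t ^ 2 / 2)]

lemma hasDerivAt_P (S : Set ℝ) (n : ℕ) (t : ℝ) :
    HasDerivAt (P S n) (P S (n + 1) t) t := by
  have key := hasDerivAt_integral_of_dominated_loc_of_deriv_le
    (F := fun (x : ℝ) (z : ℝ) => z ^ n * Real.exp (x * z - z ^ 2 / 2))
    (F' := fun (x : ℝ) (z : ℝ) => z ^ (n + 1) * Real.exp (x * z - z ^ 2 / 2))
    (bound := fun z : ℝ => |z| ^ (n + 1) * Real.exp ((|t| + 1) * |z| - z ^ 2 / 2))
    (μ := volume.restrict S) (x₀ := t) (Metric.ball_mem_nhds t one_pos)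
    (Eventually.of_forall fun x => (cont_aux n x).aestronglyMeasurable)
    (integrableOn_pk S n t)
    ((cont_aux (n + 1) t).aestronglyMeasurable)
    ?_ ((integrable_pow_kernel (n + 1) (|t| + 1)).integrableOn) ?_
  · exact key.2
  · filter_upwards with z
    intro x hx
    rw [Real.norm_eq_abs, abs_mul, abs_pow, abs_of_pos (Real.exp_pos _)]
    have hxb : |x| ≤ |t| + 1 := by
      have h : |x - t| < 1 := by rwa [Metric.mem_ball, Real.dist_eq] at hx
      calc |x| = |t + (x - t)| := by ring_nf
        _ ≤ |t| + |x - t| := abs_add_le _ _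
        _ ≤ |t| + 1 := by linarith
    have hxz : x * z ≤ (|t| + 1) * |z| :=
      calc x * z ≤ |x * z| := le_abs_self _
        _ = |x| * |z| := abs_mul _ _
        _ ≤ (|t| + 1) * |z| := by
            exact mul_le_mul_of_nonneg_right hxb (abs_nonneg z)
    exact mul_le_mul_of_nonneg_left (Real.exp_le_exp.2 (by linarith)) (by positivity)
  · filter_upwards with z
    intro x hx
    have h1 : HasDerivAt (fun x : ℝ => x * z - z ^ 2 / 2) z x :=
      (hasDerivAt_mul_const z).sub_const _
    have h2 := (h1.exp).const_mul (z ^ n)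
    show HasDerivAt (fun x => z ^ n * Real.exp (x * z - z ^ 2 / 2))
      (z ^ (n + 1) * Real.exp (x * z - z ^ 2 / 2)) x
    rw [show z ^ (n + 1) * Real.exp (x * z - z ^ 2 / 2)
      = z ^ n * (Real.exp (x * z - z ^ 2 / 2) * z) by rw [pow_succ]; ring]
    exact h2



lemma pdf_eq (t z : ℝ) :
    gaussianPDFReal t 1 z
      = (Real.sqrt (2 * π))⁻¹ * Real.exp (-t ^ 2 / 2) * (Real.exp (t * z - z ^ 2 / 2)) := by
  simp only [gaussianPDFReal, NNReal.coe_one, mul_one]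
  rw [mul_assoc, ← Real.exp_add]
  congr 2
  ring

lemma truncMean_eq {S : Set ℝ} (hS : MeasurableSet S)
    (hpos : ∀ t : ℝ, 0 < ∫ z in S, Real.exp (-(t - z) ^ 2 / 2)) (t : ℝ) :
    truncMean S t = P S 1 t / P S 0 t := by
  set C := (Real.sqrt (2 * π))⁻¹ * Real.exp (-t ^ 2 / 2) with hCdef
  have hC : 0 < C := by positivity
  have hP0 := P_pos hpos t
  have hmeas : gaussianReal t 1 S = ENNReal.ofReal (C * P S 0 t) := by
    rw [gaussianReal_apply_eq_integral t one_ne_zero S]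
    congr 1
    calc (∫ z in S, gaussianPDFReal t 1 z) = ∫ z in S, C * (z ^ 0 * Real.exp (t * z - z ^ 2 / 2)) := by
          congr 1; funext z; rw [pdf_eq, pow_zero, one_mul]
      _ = C * P S 0 t := by rw [integral_const_mul]; rfl
  have hint : (∫ z, z ∂((gaussianReal t 1).restrict S)) = C * P S 1 t := by
    rw [gaussianReal_of_var_ne_zero t one_ne_zero, restrict_withDensity hS]
    have hpdf : gaussianPDF t 1 = fun z => ((gaussianPDFReal t 1 z).toNNReal : ℝ≥0∞) := rfl
    rw [hpdf, integral_withDensity_eq_integral_smul ((measurable_gaussianPDFReal t 1).real_toNNReal)]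
    calc (∫ z in S, (gaussianPDFReal t 1 z).toNNReal • z)
        = ∫ z in S, C * (z ^ 1 * Real.exp (t * z - z ^ 2 / 2)) := by
          congr 1; funext z
          rw [NNReal.smul_def, Real.coe_toNNReal _ (gaussianPDFReal_nonneg _ _ _), pdf_eq,
            smul_eq_mul]
          ring
      _ = C * P S 1 t := by rw [integral_const_mul]; rfl
  have : truncMean S t
      = ((gaussianReal t 1 S)⁻¹).toReal • (∫ z, z ∂((gaussianReal t 1).restrict S)) := by
    rw [truncMean, truncNormal, ProbabilityTheory.cond, integral_smul_measure]
  rw [this, hmeas, hint, ENNReal.toReal_inv, ENNReal.toReal_ofReal (by positivity), smul_eq_mul]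
  field_simp

def psi (S : Set ℝ) (y t : ℝ) : ℝ :=
  (t - y) ^ 2 / 2 + Real.log (∫ z in S, Real.exp (-(t - z) ^ 2 / 2))

def dpsi (S : Set ℝ) (y t : ℝ) : ℝ := truncMean S t - y

section
variable {S : Set ℝ} (hS : MeasurableSet S)
  (hpos : ∀ t : ℝ, 0 < ∫ z in S, Real.exp (-(t - z) ^ 2 / 2))
include hS hpos

omit hS in
lemma psi_eq (y : ℝ) :
    psi S y = fun t => -(t * y) + y ^ 2 / 2 + Real.log (P S 0 t) := by
  funext t
  rw [psi, decomp, Real.log_mul (Real.exp_ne_zero _) (ne_of_gt (P_pos hpos t)), Real.log_exp]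
  ring

lemma hasDerivAt_psi (y t : ℝ) : HasDerivAt (psi S y) (dpsi S y t) t := by
  rw [psi_eq hpos]
  have h1 : HasDerivAt (fun u : ℝ => -(u * y) + y ^ 2 / 2) (-y) t :=
    ((hasDerivAt_mul_const y).neg).add_const _
  have h2 : HasDerivAt (fun u => Real.log (P S 0 u)) (P S 1 t / P S 0 t) t :=
    (hasDerivAt_P S 0 t).log (ne_of_gt (P_pos hpos t))
  have h := h1.add h2
  have : dpsi S y t = -y + P S 1 t / P S 0 t := by
    rw [dpsi, truncMean_eq hS hpos]; ring
  rw [this]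
  exact h

lemma hasDerivAt_dpsi (y t : ℝ) :
    HasDerivAt (dpsi S y)
      ((P S 2 t * P S 0 t - P S 1 t * P S 1 t) / (P S 0 t) ^ 2) t := by
  have heq : dpsi S y = fun u => P S 1 u / P S 0 u - y :=
    funext fun u => by rw [dpsi, truncMean_eq hS hpos]
  rw [heq]
  exact ((hasDerivAt_P S 1 t).div (hasDerivAt_P S 0 t) (ne_of_gt (P_pos hpos t))).sub_const y

omit hS in
lemma var_pos (t : ℝ) : 0 < P S 2 t * P S 0 t - P S 1 t * P S 1 t := by
  have hP0 := P_pos hpos t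
  set r := P S 1 t / P S 0 t with hr
  have hfe : (fun z : ℝ => (z - r) ^ 2 * Real.exp (t * z - z ^ 2 / 2))
      = fun z : ℝ => z ^ 2 * Real.exp (t * z - z ^ 2 / 2)
        - (2 * r) * (z ^ 1 * Real.exp (t * z - z ^ 2 / 2))
        + r ^ 2 * (z ^ 0 * Real.exp (t * z - z ^ 2 / 2)) := by
    funext z; ring
  have h2 := integrableOn_pk S 2 t
  have h1 := integrableOn_pk S 1 t
  have h0 := integrableOn_pk S 0 t
  have hint : IntegrableOn (fun z : ℝ => (z - r) ^ 2 * Real.exp (t * z - z ^ 2 / 2)) S := by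
    rw [hfe]
    exact (h2.sub (h1.const_mul _)).add (h0.const_mul _)
  have hval : (∫ z in S, (z - r) ^ 2 * Real.exp (t * z - z ^ 2 / 2))
      = P S 2 t - 2 * r * P S 1 t + r ^ 2 * P S 0 t := by
    rw [hfe]
    have e1 := integral_add (μ := volume.restrict S) (h2.sub (h1.const_mul (2*r))) (h0.const_mul (r^2))
    have e2 := integral_sub (μ := volume.restrict S) h2 (h1.const_mul (2*r))
    simp only [Pi.add_apply, Pi.sub_apply] at e1 e2
    rw [e1, e2, integral_const_mul, integral_const_mul]
    rfl
  have hkey : (∫ z in S, (z - r) ^ 2 * Real.exp (t * z - z ^ 2 / 2))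
      = (P S 2 t * P S 0 t - P S 1 t * P S 1 t) / P S 0 t := by
    rw [hval, hr]; field_simp; ring
  have hnn : 0 ≤ ∫ z in S, (z - r) ^ 2 * Real.exp (t * z - z ^ 2 / 2) :=
    integral_nonneg fun z => by positivity
  rcases hnn.lt_or_eq with hlt | heq
  · rw [hkey] at hlt
    exact (div_pos_iff.mp hlt).resolve_right (fun h => absurd hP0 (not_lt.2 h.2.le)) |>.1
  · exfalso
    have hae := (integral_eq_zero_iff_of_nonneg_ae
      (Eventually.of_forall fun z => by positivity) hint).mp heq.symm
    have hset : (volume.restrict S) {z : ℝ | z ≠ r} = 0 := by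
      have h := ae_iff.mp hae
      convert h using 2
      ext z
      simp only [Set.mem_setOf_eq, Pi.zero_apply]
      constructor
      · intro hz hc
        rcases mul_eq_zero.mp hc with h' | h'
        · exact hz (sub_eq_zero.mp ((pow_eq_zero_iff two_ne_zero).mp h'))
        · exact absurd h' (Real.exp_ne_zero _)
      · intro hz h'
        apply hz
        rw [sub_eq_zero.mpr h']
        ring
    have hSvol : volume S = 0 := by
      have h1 : (volume.restrict S) Set.univ = volume S := by
        rw [Measure.restrict_apply_univ]
      have h2 : (volume.restrict S) {(r : ℝ)} ≤ volume {(r : ℝ)} :=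
        Measure.restrict_le_self _
      have h3 : (volume.restrict S) Set.univ
          ≤ (volume.restrict S) {z : ℝ | z ≠ r} + (volume.restrict S) {(r : ℝ)} := by
        rw [show (Set.univ : Set ℝ) = {z : ℝ | z ≠ r} ∪ {(r : ℝ)} by
          ext z; by_cases hz : z = r <;> simp [hz]]
        exact measure_union_le _ _
      rw [h1, hset, zero_add] at h3
      have := h3.trans h2
      simpa [Real.volume_singleton] using this
    have : P S 0 t = 0 := by
      rw [P, Measure.restrict_eq_zero.mpr hSvol, integral_zero_measure]
    linarith

lemma strictMono_dpsi (y : ℝ) : StrictMono (dpsi S y) := by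
  apply strictMono_of_deriv_pos
  intro t
  rw [(hasDerivAt_dpsi hS hpos y t).deriv]
  exact div_pos (var_pos hpos t) (pow_pos (P_pos hpos t) 2)

lemma strictConvexOn_psi (y : ℝ) : StrictConvexOn ℝ Set.univ (psi S y) := by
  apply strictConvexOn_of_deriv2_pos convex_univ
  · exact (Continuous.continuousOn (by
      have : ∀ t, DifferentiableAt ℝ (psi S y) t :=
        fun t => (hasDerivAt_psi hS hpos y t).differentiableAt
      exact Differentiable.continuous this))
  · intro x _
    have hd1 : deriv (psi S y) = dpsi S y :=
      funext fun u => (hasDerivAt_psi hS hpos y u).deriv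
    have : deriv^[2] (psi S y) x = deriv (dpsi S y) x := by
      simp only [Function.iterate_succ, Function.iterate_zero, Function.comp_apply, id_eq,
        Function.iterate_one]
      rw [hd1]
    rw [this, (hasDerivAt_dpsi hS hpos y x).deriv]
    exact div_pos (var_pos hpos x) (pow_pos (P_pos hpos x) 2)

lemma tangent (y a b : ℝ) : psi S y a + dpsi S y a * (b - a) ≤ psi S y b := by
  have hcont : Continuous (psi S y) :=
    Differentiable.continuous fun t => (hasDerivAt_psi hS hpos y t).differentiableAt
  rcases lt_trichotomy a b with hab | hab | hab
  · obtain ⟨c, hc, hceq⟩ := exists_hasDerivAt_eq_slope (psi S y) (dpsi S y) hab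
      hcont.continuousOn (fun x _ => hasDerivAt_psi hS hpos y x)
    have hmono := (strictMono_dpsi hS hpos y).monotone (le_of_lt hc.1)
    have : dpsi S y c * (b - a) = psi S y b - psi S y a := by
      rw [hceq, div_mul_cancel₀ _ (sub_ne_zero.2 hab.ne')]
    nlinarith
  · simp [hab]
  · obtain ⟨c, hc, hceq⟩ := exists_hasDerivAt_eq_slope (psi S y) (dpsi S y) hab
      hcont.continuousOn (fun x _ => hasDerivAt_psi hS hpos y x)
    have hmono := (strictMono_dpsi hS hpos y).monotone (le_of_lt hc.2)
    have : dpsi S y c * (a - b) = psi S y a - psi S y b := by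
      rw [hceq, div_mul_cancel₀ _ (sub_ne_zero.2 hab.ne')]
    nlinarith

end

lemma mem_spt {n : ℕ} {v : Fin n → ℝ} {i : Fin n} : i ∈ spt v ↔ v i ≠ 0 := by
  simp [spt]

lemma dot_update {n : ℕ} (v x : Fin n → ℝ) (i : Fin n) (w : ℝ) :
    dot v (Function.update x i w) = dot v x + v i * (w - x i) := by
  classical
  have h1 : (fun k => v k * Function.update x i w k)
      = Function.update (fun k => v k * x k) i (v i * w) := by
    funext k
    by_cases hk : k = i
    · subst hk; simp
    · simp [Function.update_of_ne hk]
  rw [dot, h1, Finset.sum_update_of_mem (Finset.mem_univ i)]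
  rw [dot, ← Finset.sum_erase_add Finset.univ _ (Finset.mem_univ i)]
  rw [show Finset.univ \ {i} = Finset.univ.erase i by
    rw [Finset.erase_eq]]
  ring

lemma norm1_update {n : ℕ} (x : Fin n → ℝ) (i : Fin n) (w : ℝ) :
    norm1 (Function.update x i w) = norm1 x - |x i| + |w| := by
  classical
  have h1 : (fun k => |Function.update x i w k|)
      = Function.update (fun k => |x k|) i |w| := by
    funext k
    by_cases hk : k = i
    · subst hk; simp
    · simp [Function.update_of_ne hk]
  rw [norm1, h1, Finset.sum_update_of_mem (Finset.mem_univ i)]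
  rw [norm1, ← Finset.sum_erase_add Finset.univ _ (Finset.mem_univ i)]
  rw [show Finset.univ \ {i} = Finset.univ.erase i by rw [Finset.erase_eq]]
  ring


end PDW

/-- the primal-dual witness construction (Lemma `pdw`). -/
theorem primal_dual_witness {m n : ℕ} (S : Set ℝ) (hS : MeasurableSet S)
    (hpos : ∀ t : ℝ, 0 < ∫ z in S, Real.exp (-(t - z) ^ 2 / 2))
    (A : Fin m → Fin n → ℝ) (y : Fin m → ℝ) (lam : ℝ) (hlam : 0 < lam)
    (U : Finset (Fin n)) (xb : Fin n → ℝ) (hsupp : spt xb ⊆ U)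
    (hopt : IsMinOn (fun x => nll S A y x + lam * norm1 x) {x | spt x ⊆ U} xb) :
    -- (a)
    (∃ z : Fin n → ℝ, (∀ i ∈ U, |z i| ≤ 1) ∧
      ∀ i ∈ U, -lam * z i
        = (1 / (m : ℝ)) * ∑ j, A j i * (truncMean S (dot (A j) xb) - y j)) ∧
    -- (b); `z̆` is extended to `U^c` by `z̆_i = −(1/(λm)) Σ_j A_{ji}(E[Z_{A_j,x̆}] − y_j)`
    ((∀ i ∉ U,
        |(-(1 / (lam * m)) * ∑ j, A j i * (truncMean S (dot (A j) xb) - y j))| < 1) →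
      IsUnit (Matrix.of fun i i' : U => ∑ j, A j (i : Fin n) * A j (i' : Fin n)) →
      IsMinOn (fun x => nll S A y x + lam * norm1 x) Set.univ xb ∧
        ∀ xhat : Fin n → ℝ,
          IsMinOn (fun x => nll S A y x + lam * norm1 x) Set.univ xhat → xhat = xb) := by
  classical
  have nll_eq : ∀ x, nll S A y x = (1/(m:ℝ)) * ∑ j, PDW.psi S (y j) (dot (A j) x) :=
    fun _ => rfl
  set F : (Fin n → ℝ) → ℝ := fun x => nll S A y x + lam * norm1 x with hF
  set g : Fin n → ℝ :=
    fun i => (1/(m:ℝ)) * ∑ j, A j i * (truncMean S (dot (A j) xb) - y j) with hg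
  have hgd : ∀ i, g i = (1/(m:ℝ)) * ∑ j, A j i * PDW.dpsi S (y j) (dot (A j) xb) :=
    fun i => rfl
  -- directional functions
  set G : Fin n → ℝ → ℝ :=
    fun i w => (1/(m:ℝ)) * ∑ j, PDW.psi S (y j) (dot (A j) xb + (w - xb i) * A j i) with hGdef
  have hG : ∀ i, HasDerivAt (G i) (g i) (xb i) := by
    intro i
    have hterm : ∀ j : Fin m, HasDerivAt
        (fun w => PDW.psi S (y j) (dot (A j) xb + (w - xb i) * A j i))
        (A j i * PDW.dpsi S (y j) (dot (A j) xb)) (xb i) := by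
      intro j
      have hu : HasDerivAt (fun w => dot (A j) xb + (w - xb i) * A j i) (A j i) (xb i) := by
        simpa using (((hasDerivAt_id (xb i)).sub_const (xb i)).mul_const (A j i)).const_add
          (dot (A j) xb)
      have hp := PDW.hasDerivAt_psi hS hpos (y j) (dot (A j) xb + (xb i - xb i) * A j i)
      have hcomp := hp.comp (xb i) hu
      have heq : PDW.dpsi S (y j) (dot (A j) xb + (xb i - xb i) * A j i) * A j i
          = A j i * PDW.dpsi S (y j) (dot (A j) xb) := by
        rw [show dot (A j) xb + (xb i - xb i) * A j i = dot (A j) xb by ring]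
        ring
      rw [heq] at hcomp
      exact hcomp
    have hsum := HasDerivAt.fun_sum (fun j (_ : j ∈ Finset.univ) => hterm j)
    have hfin := hsum.const_mul (1/(m:ℝ))
    rw [hgd]
    exact hfin
  have hFupdate : ∀ i (w : ℝ),
      F (Function.update xb i w) = G i w + lam * |w| + lam * (norm1 xb - |xb i|) := by
    intro i w
    have h2 : nll S A y (Function.update xb i w) = G i w := by
      rw [nll_eq, hGdef]
      congr 1
      apply Finset.sum_congr rfl
      intro j _
      rw [PDW.dot_update]
      ring_nf
    show nll S A y (Function.update xb i w) + lam * norm1 (Function.update xb i w) = _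
    rw [h2, PDW.norm1_update]
    ring
  have hmin : ∀ i ∈ U, ∀ w, G i (xb i) + lam * |xb i| ≤ G i w + lam * |w| := by
    intro i hi w
    have hmem : Function.update xb i w ∈ {x | spt x ⊆ U} := by
      intro k hk
      rw [PDW.mem_spt] at hk
      by_cases hki : k = i
      · subst hki; exact hi
      · rw [Function.update_of_ne hki] at hk
        exact hsupp (PDW.mem_spt.mpr hk)
    have h := isMinOn_iff.mp hopt _ hmem
    have hxbeq : F xb = G i (xb i) + lam * |xb i| + lam * (norm1 xb - |xb i|) := by
      rw [← hFupdate i (xb i), Function.update_eq_self]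
    rw [hxbeq, hFupdate i w] at h
    linarith
  have hgbound : ∀ i ∈ U, |g i| ≤ lam := by
    intro i hi
    have htend := hasDerivAt_iff_tendsto_slope.mp (hG i)
    rw [abs_le]
    constructor
    · have ht : Tendsto (slope (G i) (xb i)) (𝓝[>] (xb i)) (𝓝 (g i)) :=
        htend.mono_left (nhdsWithin_mono _ fun w hw => ne_of_gt hw)
      refine ge_of_tendsto ht (eventually_mem_nhdsWithin.mono fun w hw => ?_)
      have hw' : (0:ℝ) < w - xb i := sub_pos.2 hw
      have habs : |w| - |xb i| ≤ w - xb i := by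
        have h1 := abs_sub_abs_le_abs_sub w (xb i)
        have h2 : |w - xb i| = w - xb i := abs_of_pos hw'
        linarith
      have hmw := hmin i hi w
      have hnum : -lam * (w - xb i) ≤ G i w - G i (xb i) := by
        have h3 : lam * (|w| - |xb i|) ≤ lam * (w - xb i) :=
          mul_le_mul_of_nonneg_left habs hlam.le
        nlinarith
      rw [slope_def_field]
      calc -lam = (-lam * (w - xb i))/(w - xb i) := by field_simp
        _ ≤ (G i w - G i (xb i))/(w - xb i) := (div_le_div_iff_of_pos_right hw').mpr hnum
    · have ht : Tendsto (slope (G i) (xb i)) (𝓝[<] (xb i)) (𝓝 (g i)) :=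
        htend.mono_left (nhdsWithin_mono _ fun w hw => ne_of_lt hw)
      refine le_of_tendsto ht (eventually_mem_nhdsWithin.mono fun w hw => ?_)
      have hw' : (0:ℝ) < xb i - w := sub_pos.2 hw
      have habs : |w| - |xb i| ≤ xb i - w := by
        have h1 := abs_sub_abs_le_abs_sub w (xb i)
        have h2 : |w - xb i| = xb i - w := by
          rw [abs_sub_comm]; exact abs_of_pos hw'
        linarith
      have hmw := hmin i hi w
      have hnum : G i (xb i) - G i w ≤ lam * (xb i - w) := by
        have h3 : lam * (|w| - |xb i|) ≤ lam * (xb i - w) :=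
          mul_le_mul_of_nonneg_left habs hlam.le
        nlinarith
      rw [slope_def_field]
      have heq : (G i w - G i (xb i))/(w - xb i) = (G i (xb i) - G i w)/(xb i - w) := by
        rw [show w - xb i = -(xb i - w) by ring,
          show G i w - G i (xb i) = -(G i (xb i) - G i w) by ring, neg_div_neg_eq]
      rw [heq]
      calc (G i (xb i) - G i w)/(xb i - w) ≤ (lam * (xb i - w))/(xb i - w) :=
            (div_le_div_iff_of_pos_right hw').mpr hnum
        _ = lam := by field_simp
  have hSG : ∀ i ∈ U, ∀ w : ℝ, 0 ≤ g i * (w - xb i) + lam * (|w| - |xb i|) := by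
    intro i hi w
    by_cases hxi : xb i = 0
    · rw [hxi]
      simp only [sub_zero, abs_zero]
      have h1 : |g i * w| ≤ lam * |w| := by
        rw [abs_mul]
        exact mul_le_mul_of_nonneg_right (hgbound i hi) (abs_nonneg w)
      have h2 := neg_le_abs (g i * w)
      linarith
    · have hlocmin : IsLocalMin (fun w => G i w + lam * |w|) (xb i) :=
        Eventually.of_forall fun w => hmin i hi w
      rcases lt_or_gt_of_ne hxi with hneg | hposx
      · have hev : (fun w => G i w + lam * |w|) =ᶠ[𝓝 (xb i)] (fun w => G i w + lam * (-w)) := by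
          filter_upwards [eventually_lt_nhds hneg] with w hw
          rw [abs_of_neg hw]
        have hlm2 : IsLocalMin (fun w => G i w + lam * (-w)) (xb i) := hlocmin.congr hev
        have hder : HasDerivAt (fun w => G i w + lam * (-w)) (g i + lam * (-1)) (xb i) :=
          (hG i).add (((hasDerivAt_id (xb i)).neg).const_mul lam)
        have h0 := hlm2.hasDerivAt_eq_zero hder
        have hgi : g i = lam := by linarith
        rw [hgi, abs_of_neg hneg]
        have h5 : (0:ℝ) ≤ lam * (|w| + w) := mul_nonneg hlam.le (by linarith [neg_le_abs w])
        nlinarith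
      · have hev : (fun w => G i w + lam * |w|) =ᶠ[𝓝 (xb i)] (fun w => G i w + lam * w) := by
          filter_upwards [eventually_gt_nhds hposx] with w hw
          rw [abs_of_pos hw]
        have hlm2 : IsLocalMin (fun w => G i w + lam * w) (xb i) := hlocmin.congr hev
        have hder : HasDerivAt (fun w => G i w + lam * w) (g i + lam * 1) (xb i) :=
          (hG i).add ((hasDerivAt_id (xb i)).const_mul lam)
        have h0 := hlm2.hasDerivAt_eq_zero hder
        have hgi : g i = -lam := by linarith
        rw [hgi, abs_of_pos hposx]
        have h5 : (0:ℝ) ≤ lam * (|w| - w) := mul_nonneg hlam.le (by linarith [le_abs_self w])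
        nlinarith
  have hchain : ∀ x : Fin n → ℝ,
      (∑ i, (g i * (x i - xb i) + lam * (|x i| - |xb i|))) ≤ F x - F xb := by
    intro x
    have htan : ∀ j : Fin m, PDW.dpsi S (y j) (dot (A j) xb) * (dot (A j) x - dot (A j) xb)
        ≤ PDW.psi S (y j) (dot (A j) x) - PDW.psi S (y j) (dot (A j) xb) := by
      intro j
      have := PDW.tangent hS hpos (y j) (dot (A j) xb) (dot (A j) x)
      linarith
    have hsum1 := Finset.sum_le_sum (fun j (_ : j ∈ Finset.univ) => htan j)
    have hm0 : (0:ℝ) ≤ 1/(m:ℝ) := by positivity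
    have hsum2 := mul_le_mul_of_nonneg_left hsum1 hm0
    have hFx : F x - F xb = (1/(m:ℝ)) * (∑ j, (PDW.psi S (y j) (dot (A j) x)
        - PDW.psi S (y j) (dot (A j) xb))) + lam * (norm1 x - norm1 xb) := by
      show (nll S A y x + lam * norm1 x) - (nll S A y xb + lam * norm1 xb) = _
      rw [nll_eq, nll_eq, Finset.sum_sub_distrib]
      ring
    have hswap : (∑ i, g i * (x i - xb i))
        = (1/(m:ℝ)) * ∑ j, PDW.dpsi S (y j) (dot (A j) xb) * (dot (A j) x - dot (A j) xb) := by
      have hbj : ∀ j, dot (A j) x - dot (A j) xb = ∑ i, A j i * (x i - xb i) := by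
        intro j
        rw [dot, dot, ← Finset.sum_sub_distrib]
        apply Finset.sum_congr rfl
        intro i _
        ring
      calc (∑ i, g i * (x i - xb i))
          = ∑ i, (1/(m:ℝ)) * ∑ j, (A j i * PDW.dpsi S (y j) (dot (A j) xb)) * (x i - xb i) := by
            apply Finset.sum_congr rfl
            intro i _
            rw [hgd, mul_assoc, Finset.sum_mul]
        _ = (1/(m:ℝ)) * ∑ i, ∑ j, (A j i * PDW.dpsi S (y j) (dot (A j) xb)) * (x i - xb i) := by
            rw [Finset.mul_sum]
        _ = (1/(m:ℝ)) * ∑ j, ∑ i, (A j i * PDW.dpsi S (y j) (dot (A j) xb)) * (x i - xb i) := by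
            rw [Finset.sum_comm]
        _ = (1/(m:ℝ)) * ∑ j, PDW.dpsi S (y j) (dot (A j) xb) * (dot (A j) x - dot (A j) xb) := by
            congr 1
            apply Finset.sum_congr rfl
            intro j _
            rw [hbj, Finset.mul_sum]
            apply Finset.sum_congr rfl
            intro i _
            ring
    have hnrm : norm1 x - norm1 xb = ∑ i, (|x i| - |xb i|) := by
      rw [norm1, norm1, Finset.sum_sub_distrib]
    have hsplit : (∑ i, (g i * (x i - xb i) + lam * (|x i| - |xb i|)))
        = (∑ i, g i * (x i - xb i)) + lam * ∑ i, (|x i| - |xb i|) := by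
      rw [Finset.sum_add_distrib, Finset.mul_sum]
    rw [hsplit, hswap, hFx, ← hnrm]
    linarith
  constructor
  · refine ⟨fun i => -(g i) / lam, fun i hi => ?_, fun i hi => ?_⟩
    · rw [abs_div, abs_neg, abs_of_pos hlam]
      exact (div_le_one hlam).mpr (hgbound i hi)
    · have : -lam * (-(g i) / lam) = g i := by field_simp
      rw [this, hg]
  · intro hdual hunit
    have hxbz : ∀ i, i ∉ U → xb i = 0 := by
      intro i hi
      by_contra h
      exact hi (hsupp (PDW.mem_spt.mpr h))
    have hlt : ∀ i, i ∉ U → |g i| < lam := by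
      intro i hi
      have h := hdual i hi
      rcases Nat.eq_zero_or_pos m with hm | hm
      · subst hm
        have hz : g i = 0 := by
          rw [hg]; simp
        rw [hz, abs_zero]; exact hlam
      · have hmpos : (0:ℝ) < (m:ℝ) := by exact_mod_cast hm
        have habs : |(-(1 / (lam * (m:ℝ))) * ∑ j, A j i * (truncMean S (dot (A j) xb) - y j))|
            = (1/(lam * (m:ℝ))) * |∑ j, A j i * (truncMean S (dot (A j) xb) - y j)| := by
          rw [abs_mul, abs_neg, abs_of_pos (by positivity)]
        rw [habs] at h
        have hgabs : |g i| = (1/(m:ℝ)) * |∑ j, A j i * (truncMean S (dot (A j) xb) - y j)| := by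
          rw [hg, abs_mul, abs_of_pos (by positivity)]
        rw [hgabs]
        calc (1/(m:ℝ)) * |∑ j, A j i * (truncMean S (dot (A j) xb) - y j)|
            = lam * ((1/(lam * (m:ℝ))) * |∑ j, A j i * (truncMean S (dot (A j) xb) - y j)|) := by
              field_simp
          _ < lam * 1 := mul_lt_mul_of_pos_left h hlam
          _ = lam := mul_one lam
    have hSG' : ∀ i (w : ℝ), 0 ≤ g i * (w - xb i) + lam * (|w| - |xb i|) := by
      intro i w
      by_cases hiU : i ∈ U
      · exact hSG i hiU w
      · rw [hxbz i hiU]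
        simp only [sub_zero, abs_zero]
        have h1 : |g i * w| ≤ lam * |w| := by
          rw [abs_mul]
          exact mul_le_mul_of_nonneg_right (hlt i hiU).le (abs_nonneg w)
        have h2 := neg_le_abs (g i * w)
        linarith
    have hglobal : IsMinOn F Set.univ xb := by
      rw [isMinOn_iff]
      intro x _
      have hc := hchain x
      have hnn : (0:ℝ) ≤ ∑ i, (g i * (x i - xb i) + lam * (|x i| - |xb i|)) :=
        Finset.sum_nonneg fun i _ => hSG' i (x i)
      have : F xb ≤ F x := by linarith
      exact this
    refine ⟨hglobal, ?_⟩
    intro xhat hxhat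
    have hFeq : F xhat = F xb :=
      le_antisymm (isMinOn_iff.mp hxhat xb (Set.mem_univ _))
        (isMinOn_iff.mp hglobal xhat (Set.mem_univ _))
    have hterm0 : ∀ i, g i * (xhat i - xb i) + lam * (|xhat i| - |xb i|) = 0 := by
      have hsle := hchain xhat
      have hd0 : F xhat - F xb = 0 := by rw [hFeq]; ring
      have hzero : (∑ i, (g i * (xhat i - xb i) + lam * (|xhat i| - |xb i|))) = 0 :=
        le_antisymm (by linarith)
          (Finset.sum_nonneg fun i _ => hSG' i (xhat i))
      intro i
      exact (Finset.sum_eq_zero_iff_of_nonneg (fun i _ => hSG' i (xhat i))).mp hzero i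
        (Finset.mem_univ i)
    have hhatz : ∀ i, i ∉ U → xhat i = 0 := by
      intro i hi
      by_contra hne
      have h0 := hterm0 i
      rw [hxbz i hi] at h0
      simp only [sub_zero, abs_zero] at h0
      have h1 : -(g i * xhat i) ≤ |g i| * |xhat i| := by
        rw [← abs_mul]; exact neg_le_abs _
      have h2 : |g i| * |xhat i| < lam * |xhat i| :=
        mul_lt_mul_of_pos_right (hlt i hi) (abs_pos.mpr hne)
      linarith
    by_cases hcase : ∀ j, dot (A j) xhat = dot (A j) xb
    · set B : Matrix U U ℝ :=
        Matrix.of fun i i' : U => ∑ j, A j (i : Fin n) * A j (i' : Fin n) with hB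
      set w : U → ℝ := fun i => xhat (i : Fin n) - xb (i : Fin n) with hwdef
      have hBw : B.mulVec w = 0 := by
        funext i
        show (∑ i' : U, B i i' * w i') = 0
        have hinner : ∀ j, (∑ i' : U, A j (i' : Fin n) * w i') = 0 := by
          intro j
          have h1 : (∑ i' : U, A j (i' : Fin n) * w i')
              = ∑ i' ∈ U, A j i' * (xhat i' - xb i') :=
            Finset.sum_coe_sort U (fun i' => A j i' * (xhat i' - xb i'))
          have h2 : (∑ i' ∈ U, A j i' * (xhat i' - xb i'))
              = ∑ i' : Fin n, A j i' * (xhat i' - xb i') := by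
            apply Finset.sum_subset (Finset.subset_univ U)
            intro i' _ hi'
            rw [hhatz i' hi', hxbz i' hi']
            ring
          have h3 : (∑ i' : Fin n, A j i' * (xhat i' - xb i'))
              = dot (A j) xhat - dot (A j) xb := by
            rw [dot, dot, ← Finset.sum_sub_distrib]
            apply Finset.sum_congr rfl
            intro i' _
            ring
          rw [h1, h2, h3, hcase j, sub_self]
        calc (∑ i' : U, B i i' * w i')
            = ∑ i' : U, ∑ j, (A j (i : Fin n) * (A j (i' : Fin n) * w i')) := by
              apply Finset.sum_congr rfl
              intro i' _
              rw [hB]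
              show (∑ j, A j (i : Fin n) * A j (i' : Fin n)) * w i' = _
              rw [Finset.sum_mul]
              apply Finset.sum_congr rfl
              intro j _
              ring
          _ = ∑ j, ∑ i' : U, (A j (i : Fin n) * (A j (i' : Fin n) * w i')) :=
              Finset.sum_comm
          _ = ∑ j, A j (i : Fin n) * (∑ i' : U, A j (i' : Fin n) * w i') := by
              apply Finset.sum_congr rfl
              intro j _
              rw [Finset.mul_sum]
          _ = 0 := by
              apply Finset.sum_eq_zero
              intro j _
              rw [hinner j, mul_zero]
      obtain ⟨u, hu⟩ := hunit
      have hw0 : w = 0 := by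
        calc w = (1 : Matrix U U ℝ).mulVec w := (Matrix.one_mulVec w).symm
          _ = ((↑u⁻¹ * ↑u : Matrix U U ℝ)).mulVec w := by rw [u.inv_mul]
          _ = (↑u⁻¹ : Matrix U U ℝ).mulVec ((↑u : Matrix U U ℝ).mulVec w) := by
              rw [Matrix.mulVec_mulVec]
          _ = 0 := by rw [hu, hBw, Matrix.mulVec_zero]
      funext i
      by_cases hiU : i ∈ U
      · have h := congrFun hw0 ⟨i, hiU⟩
        simpa [hwdef, sub_eq_zero] using h
      · rw [hhatz i hiU, hxbz i hiU]
    · push_neg at hcase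
      obtain ⟨j₀, hj₀⟩ := hcase
      exfalso
      set xm : Fin n → ℝ := fun i => (xb i + xhat i)/2 with hxm
      have hdotm : ∀ j, dot (A j) xm = (dot (A j) xb + dot (A j) xhat)/2 := by
        intro j
        rw [dot, dot, dot, ← Finset.sum_add_distrib, Finset.sum_div]
        apply Finset.sum_congr rfl
        intro i _
        simp only [hxm]
        ring
      have hψ : ∀ j, PDW.psi S (y j) (dot (A j) xm)
          ≤ (PDW.psi S (y j) (dot (A j) xb) + PDW.psi S (y j) (dot (A j) xhat))/2 := by
        intro j
        have hc := (PDW.strictConvexOn_psi hS hpos (y j)).convexOn.2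
          (Set.mem_univ (dot (A j) xb)) (Set.mem_univ (dot (A j) xhat))
          (by norm_num : (0:ℝ) ≤ 1/2) (by norm_num : (0:ℝ) ≤ 1/2) (by norm_num)
        rw [smul_eq_mul, smul_eq_mul, smul_eq_mul, smul_eq_mul] at hc
        rw [hdotm j]
        have he : (1:ℝ)/2 * dot (A j) xb + 1/2 * dot (A j) xhat
            = (dot (A j) xb + dot (A j) xhat)/2 := by ring
        rw [he] at hc
        linarith
      have hψs : PDW.psi S (y j₀) (dot (A j₀) xm)
          < (PDW.psi S (y j₀) (dot (A j₀) xb) + PDW.psi S (y j₀) (dot (A j₀) xhat))/2 := by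
        have hc := (PDW.strictConvexOn_psi hS hpos (y j₀)).2
          (Set.mem_univ (dot (A j₀) xb)) (Set.mem_univ (dot (A j₀) xhat))
          (Ne.symm hj₀) (by norm_num : (0:ℝ) < 1/2) (by norm_num : (0:ℝ) < 1/2) (by norm_num)
        rw [smul_eq_mul, smul_eq_mul, smul_eq_mul, smul_eq_mul] at hc
        rw [hdotm j₀]
        have he : (1:ℝ)/2 * dot (A j₀) xb + 1/2 * dot (A j₀) xhat
            = (dot (A j₀) xb + dot (A j₀) xhat)/2 := by ring
        rw [he] at hc
        linarith
      have hmpos : (0:ℝ) < (m:ℝ) := by exact_mod_cast j₀.pos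
      have hnllm : nll S A y xm < (nll S A y xb + nll S A y xhat)/2 := by
        rw [nll_eq, nll_eq, nll_eq]
        have hsum : (∑ j, PDW.psi S (y j) (dot (A j) xm))
            < ∑ j, (PDW.psi S (y j) (dot (A j) xb) + PDW.psi S (y j) (dot (A j) xhat))/2 :=
          Finset.sum_lt_sum (fun j _ => hψ j) ⟨j₀, Finset.mem_univ _, hψs⟩
        calc (1/(m:ℝ)) * ∑ j, PDW.psi S (y j) (dot (A j) xm)
            < (1/(m:ℝ)) * ∑ j, (PDW.psi S (y j) (dot (A j) xb)
                + PDW.psi S (y j) (dot (A j) xhat))/2 :=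
              mul_lt_mul_of_pos_left hsum (by positivity)
          _ = ((1/(m:ℝ)) * ∑ j, PDW.psi S (y j) (dot (A j) xb)
              + (1/(m:ℝ)) * ∑ j, PDW.psi S (y j) (dot (A j) xhat))/2 := by
              rw [← Finset.sum_div, Finset.sum_add_distrib]
              ring
      have hnorm : norm1 xm ≤ (norm1 xb + norm1 xhat)/2 := by
        rw [norm1, norm1, norm1, ← Finset.sum_add_distrib, Finset.sum_div]
        apply Finset.sum_le_sum
        intro i _
        rw [hxm]
        have := abs_add_le (xb i) (xhat i)
        calc |(xb i + xhat i)/2| = |xb i + xhat i|/2 := by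
              rw [abs_div]
              norm_num
          _ ≤ (|xb i| + |xhat i|)/2 := by linarith
      have hFm : F xm < F xb := by
        have he1 : F xm = nll S A y xm + lam * norm1 xm := rfl
        have he2 : F xb = nll S A y xb + lam * norm1 xb := rfl
        have he3 : F xhat = nll S A y xhat + lam * norm1 xhat := rfl
        have h4 : lam * norm1 xm ≤ lam * ((norm1 xb + norm1 xhat)/2) :=
          mul_le_mul_of_nonneg_left hnorm hlam.le
        have h5 : F xhat = F xb := hFeq
        rw [he3, he2] at h5
        rw [he1, he2]
        linarith
      exact absurd (isMinOn_iff.mp hglobal xm (Set.mem_univ _)) (not_le.mpr hFm)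
end
end

section
/- Let S ⊆ ℝ be measurable with γ_S(t) > 0 for all t. Then the function t ↦ μ_t is differentiable and (d/dt) μ_t = Var(Z_t) for every t ∈ ℝ. -/
open MeasureTheory ProbabilityTheory Real Filter Topology

noncomputable section

namespace TruncAux

open Real MeasureTheory ProbabilityTheory

lemma gaussianPDFReal_one (t z : ℝ) :
    gaussianPDFReal t 1 z = (Real.sqrt (2 * π))⁻¹ * Real.exp (-(z - t) ^ 2 / 2) := by
  simp [gaussianPDFReal]

lemma pdf_le (t z : ℝ) : gaussianPDFReal t 1 z ≤ Real.exp (-(z - t) ^ 2 / 2) := by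
  rw [gaussianPDFReal_one]
  have h1 : (1:ℝ) ≤ Real.sqrt (2 * π) := by
    rw [show (1:ℝ) = Real.sqrt 1 by simp]
    exact Real.sqrt_le_sqrt (by nlinarith [Real.pi_gt_three])
  calc (Real.sqrt (2 * π))⁻¹ * Real.exp (-(z - t) ^ 2 / 2)
      ≤ 1 * Real.exp (-(z - t) ^ 2 / 2) :=
        mul_le_mul_of_nonneg_right (inv_le_one_of_one_le₀ h1) (Real.exp_pos _).le
    _ = Real.exp (-(z - t) ^ 2 / 2) := one_mul _

lemma pdf_pos (t z : ℝ) : 0 < gaussianPDFReal t 1 z := gaussianPDFReal_pos t 1 z one_ne_zero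

lemma integrable_abs_pow_gauss (k : ℕ) (c : ℝ) :
    Integrable (fun x : ℝ => |x| ^ k * Real.exp (-(x - c) ^ 2 / 8)) := by
  have base : Integrable (fun x : ℝ => Real.exp (-(1/16 : ℝ) * x ^ 2)) :=
    integrable_exp_neg_mul_sq (by norm_num)
  have base' := (base.comp_sub_right c).const_mul ((k.factorial : ℝ) * Real.exp (|c| + 4))
  refine base'.mono' ?_ ?_
  · exact ((continuous_abs.pow k).mul
      ((((continuous_id.sub continuous_const).pow 2).neg.div_const 8).rexp)).aestronglyMeasurable
  · filter_upwards with x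
    rw [Real.norm_eq_abs, abs_of_nonneg (by positivity)]
    have h1 : |x| ^ k ≤ (k.factorial : ℝ) * Real.exp |x| := by
      have h := Real.pow_div_factorial_le_exp (|x|) (abs_nonneg x) k
      rw [div_le_iff₀ (by positivity)] at h
      linarith
    have h2 : Real.exp |x| * Real.exp (-(x - c) ^ 2 / 8)
        ≤ Real.exp (|c| + 4) * Real.exp (-(1/16 : ℝ) * (x - c) ^ 2) := by
      rw [← Real.exp_add, ← Real.exp_add]
      apply Real.exp_le_exp.mpr
      have hxc : |x - c| ≤ (x - c) ^ 2 / 16 + 4 := by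
        nlinarith [sq_nonneg (|x - c| - 8), sq_abs (x - c), abs_nonneg (x - c)]
      have hx : |x| ≤ |x - c| + |c| := by
        calc |x| = |(x - c) + c| := by ring_nf
          _ ≤ |x - c| + |c| := abs_add_le _ _
      linarith
    calc |x| ^ k * Real.exp (-(x - c) ^ 2 / 8)
        ≤ ((k.factorial : ℝ) * Real.exp |x|) * Real.exp (-(x - c) ^ 2 / 8) :=
          mul_le_mul_of_nonneg_right h1 (Real.exp_pos _).le
      _ = (k.factorial : ℝ) * (Real.exp |x| * Real.exp (-(x - c) ^ 2 / 8)) := by ring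
      _ ≤ (k.factorial : ℝ) * (Real.exp (|c| + 4) * Real.exp (-(1/16 : ℝ) * (x - c) ^ 2)) :=
          mul_le_mul_of_nonneg_left h2 (by positivity)
      _ = _ := by ring

lemma continuous_g (k : ℕ) (t : ℝ) : Continuous (fun z : ℝ => z ^ k * gaussianPDFReal t 1 z) := by
  simp only [gaussianPDFReal_one]
  exact (continuous_pow k).mul (continuous_const.mul
    ((((continuous_id.sub continuous_const).pow 2).neg.div_const 2).rexp))

lemma continuous_g' (k : ℕ) (t : ℝ) :
    Continuous (fun z : ℝ => z ^ k * (z - t) * gaussianPDFReal t 1 z) := by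
  simp only [gaussianPDFReal_one]
  exact ((continuous_pow k).mul (continuous_id.sub continuous_const)).mul (continuous_const.mul
    ((((continuous_id.sub continuous_const).pow 2).neg.div_const 2).rexp))

lemma integrable_g (k : ℕ) (t : ℝ) :
    Integrable (fun z : ℝ => z ^ k * gaussianPDFReal t 1 z) := by
  refine (integrable_abs_pow_gauss k t).mono'
    (continuous_g k t).aestronglyMeasurable ?_
  filter_upwards with z
  rw [Real.norm_eq_abs, abs_mul, abs_pow]
  have h1 : |gaussianPDFReal t 1 z| = gaussianPDFReal t 1 z := abs_of_pos (pdf_pos t z)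
  rw [h1]
  have h2 : gaussianPDFReal t 1 z ≤ Real.exp (-(z - t) ^ 2 / 8) :=
    (pdf_le t z).trans (Real.exp_le_exp.mpr (by nlinarith [sq_nonneg (z - t)]))
  exact mul_le_mul_of_nonneg_left h2 (by positivity)

lemma key_bound {u d : ℝ} (hd : |d| < 1) :
    |u - d| * Real.exp (-(u - d) ^ 2 / 2) ≤ Real.exp (8/3) * Real.exp (-u ^ 2 / 8) := by
  have hud : u * d ≤ |u| := by
    calc u * d ≤ |u * d| := le_abs_self _
      _ = |u| * |d| := abs_mul u d
      _ ≤ |u| * 1 := mul_le_mul_of_nonneg_left hd.le (abs_nonneg u)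
      _ = |u| := mul_one _
  have h1 : |u - d| ≤ |u| + 1 := by
    calc |u - d| ≤ |u| + |d| := abs_sub u d
      _ ≤ |u| + 1 := by linarith
  have h3 : -(u - d) ^ 2 / 2 ≤ -u ^ 2 / 2 + |u| := by nlinarith [sq_nonneg d]
  calc |u - d| * Real.exp (-(u - d) ^ 2 / 2)
      ≤ (|u| + 1) * Real.exp (-u ^ 2 / 2 + |u|) :=
        mul_le_mul h1 (Real.exp_le_exp.mpr h3) (Real.exp_pos _).le (by positivity)
    _ ≤ Real.exp |u| * Real.exp (-u ^ 2 / 2 + |u|) :=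
        mul_le_mul_of_nonneg_right (Real.add_one_le_exp _) (Real.exp_pos _).le
    _ = Real.exp (|u| + (-u ^ 2 / 2 + |u|)) := (Real.exp_add _ _).symm
    _ ≤ Real.exp (8/3 + -u ^ 2 / 8) := by
        apply Real.exp_le_exp.mpr
        nlinarith [sq_nonneg (|u| - 8/3), sq_abs u]
    _ = Real.exp (8/3) * Real.exp (-u ^ 2 / 8) := Real.exp_add _ _

/-- The basic family of set integrals. -/
def G (S : Set ℝ) (k : ℕ) (t : ℝ) : ℝ := ∫ z in S, z ^ k * gaussianPDFReal t 1 z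

lemma hasDerivAt_G (S : Set ℝ) (hS : MeasurableSet S) (k : ℕ) (t₀ : ℝ) :
    HasDerivAt (G S k) (G S (k+1) t₀ - t₀ * G S k t₀) t₀ := by
  have main := hasDerivAt_integral_of_dominated_loc_of_deriv_le
      (μ := volume.restrict S) (x₀ := t₀) (s := Metric.ball t₀ 1)
      (F := fun t z => z ^ k * gaussianPDFReal t 1 z)
      (F' := fun t z => z ^ k * (z - t) * gaussianPDFReal t 1 z)
      (bound := fun z => Real.exp (8/3) * (|z| ^ k * Real.exp (-(z - t₀) ^ 2 / 8)))
      (Metric.ball_mem_nhds t₀ one_pos)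
      (Filter.Eventually.of_forall fun t => (continuous_g k t).aestronglyMeasurable.restrict)
      ((integrable_g k t₀).restrict)
      ((continuous_g' k t₀).aestronglyMeasurable.restrict)
      ?_ (((integrable_abs_pow_gauss k t₀).const_mul _).restrict) ?_
  · have heq : (∫ z in S, z ^ k * (z - t₀) * gaussianPDFReal t₀ 1 z)
        = G S (k+1) t₀ - t₀ * G S k t₀ := by
      have hpt : ∀ z : ℝ, z ^ k * (z - t₀) * gaussianPDFReal t₀ 1 z
          = z ^ (k+1) * gaussianPDFReal t₀ 1 z - t₀ * (z ^ k * gaussianPDFReal t₀ 1 z) := by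
        intro z; ring
      rw [show (fun z => z ^ k * (z - t₀) * gaussianPDFReal t₀ 1 z)
            = fun z => z ^ (k+1) * gaussianPDFReal t₀ 1 z
              - t₀ * (z ^ k * gaussianPDFReal t₀ 1 z) from funext hpt]
      rw [integral_sub ((integrable_g (k+1) t₀).restrict)
        (((integrable_g k t₀).restrict).const_mul t₀), integral_const_mul]
      rfl
    exact heq ▸ main.2
  · filter_upwards with z
    intro x hx
    rw [Metric.mem_ball, Real.dist_eq] at hx
    rw [Real.norm_eq_abs, abs_mul, abs_mul, abs_pow,
      abs_of_pos (pdf_pos x z)]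
    have hk : |z - x| * gaussianPDFReal x 1 z
        ≤ Real.exp (8/3) * Real.exp (-(z - t₀) ^ 2 / 8) := by
      have h1 : |z - x| * gaussianPDFReal x 1 z ≤ |z - x| * Real.exp (-(z - x) ^ 2 / 2) :=
        mul_le_mul_of_nonneg_left (pdf_le x z) (abs_nonneg _)
      have h2 := key_bound (u := z - t₀) (d := x - t₀) hx
      have h3 : z - t₀ - (x - t₀) = z - x := by ring
      rw [h3] at h2
      linarith
    calc |z| ^ k * |z - x| * gaussianPDFReal x 1 z
        = |z| ^ k * (|z - x| * gaussianPDFReal x 1 z) := by ring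
      _ ≤ |z| ^ k * (Real.exp (8/3) * Real.exp (-(z - t₀) ^ 2 / 8)) :=
          mul_le_mul_of_nonneg_left hk (by positivity)
      _ = Real.exp (8/3) * (|z| ^ k * Real.exp (-(z - t₀) ^ 2 / 8)) := by ring
  · filter_upwards with z
    intro x _
    simp only [gaussianPDFReal_one]
    have h1 : HasDerivAt (fun x : ℝ => z - x) (-1) x := (hasDerivAt_id x).const_sub z
    have h0 : HasDerivAt (fun x : ℝ => -(z - x) ^ 2 / 2) (z - x) x := by
      have h2 := (h1.pow 2).neg.div_const 2
      refine h2.congr_deriv ?_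
      push_cast
      ring
    have h4 := ((h0.exp.const_mul ((Real.sqrt (2 * π))⁻¹)).const_mul (z ^ k))
    refine h4.congr_deriv ?_
    ring

lemma integral_truncNormal_eq (S : Set ℝ) (hS : MeasurableSet S) (t : ℝ) (f : ℝ → ℝ) :
    ∫ z, f z ∂(truncNormal S t)
      = (gammaS S t)⁻¹ * ∫ z in S, f z * gaussianPDFReal t 1 z := by
  rw [truncNormal, ProbabilityTheory.cond, integral_smul_measure, ENNReal.toReal_inv,
    smul_eq_mul]
  congr 1
  conv_lhs => rw [gaussianReal_of_var_ne_zero t one_ne_zero]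
  rw [restrict_withDensity hS]
  have hpdf : gaussianPDF t 1 = fun z => ((gaussianPDFReal t 1 z).toNNReal : ENNReal) := rfl
  rw [hpdf, integral_withDensity_eq_integral_smul ((measurable_gaussianPDFReal t 1).real_toNNReal) f]
  refine integral_congr_ae (Filter.Eventually.of_forall fun z => ?_)
  simp only [NNReal.smul_def, Real.coe_toNNReal _ (gaussianPDFReal_nonneg t 1 z)]
  · exact mul_comm _ _

lemma G_zero (S : Set ℝ) (hS : MeasurableSet S) (t : ℝ) : G S 0 t = gammaS S t := by
  rw [gammaS, gaussianReal_apply_eq_integral t one_ne_zero S,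
    ENNReal.toReal_ofReal (setIntegral_nonneg hS fun z _ => gaussianPDFReal_nonneg t 1 z)]
  unfold G
  refine integral_congr_ae (Filter.Eventually.of_forall fun z => ?_)
  simp

lemma integral_id_truncNormal (S : Set ℝ) (hS : MeasurableSet S) (t : ℝ) :
    ∫ z, z ∂(truncNormal S t) = (gammaS S t)⁻¹ * G S 1 t := by
  rw [integral_truncNormal_eq S hS t (fun z => z)]
  congr 1
  unfold G
  refine integral_congr_ae (Filter.Eventually.of_forall fun z => ?_)
  simp

lemma integral_sq_truncNormal (S : Set ℝ) (hS : MeasurableSet S) (t : ℝ) :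
    ∫ z, z ^ 2 ∂(truncNormal S t) = (gammaS S t)⁻¹ * G S 2 t := by
  rw [integral_truncNormal_eq S hS t (fun z => z ^ 2)]
  rfl

end TruncAux

/-- the derivative of the truncated mean is the truncated variance
(Lemma `derivative`). -/
theorem truncMean_hasDerivAt (S : Set ℝ) (hS : MeasurableSet S)
    (hpos : ∀ t : ℝ, 0 < gammaS S t) (t : ℝ) :
    HasDerivAt (truncMean S) (truncVar S t) t := by
  classical
  open TruncAux in
  have hne0 : ∀ s : ℝ, (gaussianReal s 1) S ≠ 0 := by
    intro s h
    have h2 := hpos s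
    rw [gammaS, h] at h2
    simp at h2
  have hG0 : ∀ s : ℝ, TruncAux.G S 0 s = gammaS S s := fun s => TruncAux.G_zero S hS s
  have hG0pos : ∀ s : ℝ, 0 < TruncAux.G S 0 s := fun s => (hG0 s) ▸ hpos s
  have hmean : truncMean S = fun s => TruncAux.G S 1 s / TruncAux.G S 0 s := by
    funext s
    show (∫ z, z ∂(truncNormal S s)) = _
    rw [TruncAux.integral_id_truncNormal S hS s, ← hG0 s, div_eq_inv_mul]
  haveI hprob : IsProbabilityMeasure (truncNormal S t) :=
    ProbabilityTheory.cond_isProbabilityMeasure (hne0 t)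
  have hmem : MeasureTheory.MemLp id 2 (truncNormal S t) := by
    rw [memLp_two_iff_integrable_sq aestronglyMeasurable_id]
    have hrepr : truncNormal S t
        = ((gaussianReal t 1) S)⁻¹ • (gaussianReal t 1).restrict S := rfl
    rw [hrepr]
    refine Integrable.smul_measure ?_ (ENNReal.inv_ne_top.mpr (hne0 t))
    rw [gaussianReal_of_var_ne_zero t one_ne_zero, restrict_withDensity hS,
      integrable_withDensity_iff (measurable_gaussianPDF t 1)
        (Filter.Eventually.of_forall fun z => ENNReal.ofReal_lt_top)]
    have heq : (fun x : ℝ => id x ^ 2 * (gaussianPDF t 1 x).toReal)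
        = fun x => x ^ 2 * gaussianPDFReal t 1 x := by
      funext x
      simp [gaussianPDF, ENNReal.toReal_ofReal (gaussianPDFReal_nonneg t 1 x)]
    rw [heq]
    exact (TruncAux.integrable_g 2 t).restrict
  have hvar : truncVar S t = TruncAux.G S 2 t / TruncAux.G S 0 t
      - (TruncAux.G S 1 t / TruncAux.G S 0 t) ^ 2 := by
    show variance id (truncNormal S t) = _
    rw [ProbabilityTheory.variance_eq_sub hmem]
    have e2 : (∫ z, (id ^ 2 : ℝ → ℝ) z ∂(truncNormal S t))
        = TruncAux.G S 2 t / TruncAux.G S 0 t := by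
      simp only [Pi.pow_apply, id_eq]
      rw [TruncAux.integral_sq_truncNormal S hS t, ← hG0 t, div_eq_inv_mul]
    have e1 : (∫ z, id z ∂(truncNormal S t))
        = TruncAux.G S 1 t / TruncAux.G S 0 t := by
      simp only [id_eq]
      rw [TruncAux.integral_id_truncNormal S hS t, ← hG0 t, div_eq_inv_mul]
    rw [e2, e1]
  have h0 := TruncAux.hasDerivAt_G S hS 0 t
  have h1 := TruncAux.hasDerivAt_G S hS 1 t
  have hd := h1.div h0 (hG0pos t).ne'
  rw [hmean, hvar]
  refine hd.congr_deriv ?_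
  have ha := (hG0pos t).ne'
  field_simp
  ring
end
end

section
/- Let S ⊆ ℝ be measurable with γ_S(t) > 0 for all t, and let t, t* ∈ ℝ. Then sign(μ_t − μ_{t*}) = sign(t − t*). Moreover, for any constant β > 0 there is a constant c = c(β) > 0 such that if γ_S(t*) ≥ β, then |μ_t − μ_{t*}| ≥ c·min(1, |t − t*|). -/
open MeasureTheory ProbabilityTheory Real Filter Topology

noncomputable section

open scoped ENNReal NNReal

namespace TM

/-- k-th moment-type integral against the Gaussian pdf, restricted to S. -/
def Fk (S : Set ℝ) (k : ℕ) (t : ℝ) : ℝ := ∫ z in S, z ^ k * gaussianPDFReal t 1 z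

lemma gpdf_def (t z : ℝ) : gaussianPDFReal t 1 z = (Real.sqrt (2 * Real.pi))⁻¹ * Real.exp (-(z - t)^2 / 2) := by
  simp [gaussianPDFReal]

lemma gpdf_nonneg (t z : ℝ) : 0 ≤ gaussianPDFReal t 1 z := gaussianPDFReal_nonneg t 1 z

lemma gpdf_le (t z : ℝ) : gaussianPDFReal t 1 z ≤ (Real.sqrt (2 * Real.pi))⁻¹ := by
  rw [gpdf_def]
  have h1 : Real.exp (-(z - t)^2 / 2) ≤ 1 := by
    rw [Real.exp_le_one_iff]; nlinarith [sq_nonneg (z-t)]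
  have h2 : (0:ℝ) ≤ (Real.sqrt (2 * Real.pi))⁻¹ := by positivity
  calc (Real.sqrt (2 * Real.pi))⁻¹ * Real.exp (-(z - t)^2 / 2)
      ≤ (Real.sqrt (2 * Real.pi))⁻¹ * 1 := mul_le_mul_of_nonneg_left h1 h2
    _ = _ := mul_one _


lemma integrable_master (a c : ℝ) (ha : 0 ≤ a) (m : ℕ) :
    Integrable (fun u : ℝ => (|u| + a)^m * Real.exp (c * |u| - u^2/2)) := by
  have hb : ∀ u : ℝ, ‖(|u| + a)^m * Real.exp (c * |u| - u^2/2)‖ ≤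
      ((m.factorial : ℝ) * Real.exp a * Real.exp ((|c|+1)^2)) * Real.exp (-(1/4) * u^2) := by
    intro u
    rw [Real.norm_eq_abs, abs_of_nonneg (by positivity)]
    have hm : (0:ℝ) < m.factorial := by exact_mod_cast m.factorial_pos
    have h1 : (|u| + a)^m ≤ (m.factorial : ℝ) * Real.exp (|u| + a) := by
      have h := Real.pow_div_factorial_le_exp (x := |u| + a) (by positivity) m
      rw [div_le_iff₀ hm] at h
      linarith [h]
    calc (|u| + a)^m * Real.exp (c * |u| - u^2/2)
        ≤ ((m.factorial : ℝ) * Real.exp (|u| + a)) * Real.exp (c * |u| - u^2/2) :=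
          mul_le_mul_of_nonneg_right h1 (Real.exp_pos _).le
      _ = (m.factorial : ℝ) * Real.exp ((|u| + a) + (c * |u| - u^2/2)) := by
          simp only [Real.exp_add, Real.exp_sub]; ring
      _ ≤ (m.factorial : ℝ) * Real.exp (a + ((|c|+1)^2 + (-(1/4) * u^2))) := by
          refine mul_le_mul_of_nonneg_left (Real.exp_le_exp.2 ?_) hm.le
          nlinarith [sq_abs u, sq_nonneg (|u|/2 - (|c|+1)),
            mul_le_mul_of_nonneg_right (le_abs_self c) (abs_nonneg u)]
      _ = ((m.factorial : ℝ) * Real.exp a * Real.exp ((|c|+1)^2)) * Real.exp (-(1/4) * u^2) := by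
          simp only [Real.exp_add, Real.exp_sub]; ring
  refine Integrable.mono' ((integrable_exp_neg_mul_sq (by norm_num : (0:ℝ) < 1/4)).const_mul _)
    ?_ (ae_of_all _ hb)
  exact Continuous.aestronglyMeasurable (by fun_prop)

lemma gpdf_cont (t : ℝ) : Continuous (gaussianPDFReal t 1) := by
  rw [gaussianPDFReal_def]; fun_prop

lemma integrable_abs_pow_gpdf (k : ℕ) (t : ℝ) :
    Integrable (fun z : ℝ => |z|^k * gaussianPDFReal t 1 z) := by
  have hi : Integrable (fun z : ℝ =>
      (Real.sqrt (2 * Real.pi))⁻¹ * ((|z - t| + |t|)^k * Real.exp (0 * |z - t| - (z - t)^2/2))) :=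
    (((integrable_master |t| 0 (abs_nonneg t) k).comp_sub_right t).const_mul _)
  refine Integrable.mono' hi ?_ (ae_of_all _ ?_)
  · exact Continuous.aestronglyMeasurable ((continuous_abs.pow k).mul (gpdf_cont t))
  · intro z
    rw [Real.norm_eq_abs,
      abs_of_nonneg (mul_nonneg (pow_nonneg (abs_nonneg z) k) (gpdf_nonneg t z))]
    rw [gpdf_def]
    have h1 : |z|^k ≤ (|z - t| + |t|)^k := by
      refine pow_le_pow_left₀ (abs_nonneg z) ?_ k
      calc |z| = |z - t + t| := by ring_nf
        _ ≤ |z - t| + |t| := abs_add_le _ _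
    have h2 : Real.exp (-(z - t)^2 / 2) = Real.exp (0 * |z - t| - (z - t)^2/2) := by ring_nf
    rw [h2]
    have h3 : (0:ℝ) ≤ (Real.sqrt (2 * Real.pi))⁻¹ := by positivity
    calc |z|^k * ((Real.sqrt (2 * Real.pi))⁻¹ * Real.exp (0 * |z - t| - (z - t)^2/2))
        ≤ (|z - t| + |t|)^k * ((Real.sqrt (2 * Real.pi))⁻¹ * Real.exp (0 * |z - t| - (z - t)^2/2)) := by
          exact mul_le_mul_of_nonneg_right h1 (by positivity)
      _ = (Real.sqrt (2 * Real.pi))⁻¹ * ((|z - t| + |t|)^k * Real.exp (0 * |z - t| - (z - t)^2/2)) := by ring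

lemma integrable_pow_gpdf (k : ℕ) (t : ℝ) :
    Integrable (fun z : ℝ => z^k * gaussianPDFReal t 1 z) := by
  refine Integrable.mono' (integrable_abs_pow_gpdf k t) ?_ (ae_of_all _ ?_)
  · exact Continuous.aestronglyMeasurable ((continuous_pow k).mul (gpdf_cont t))
  · intro z
    rw [Real.norm_eq_abs, abs_mul, abs_pow, abs_of_nonneg (gpdf_nonneg t z)]


lemma setIntegral_gaussianReal (t : ℝ) {A : Set ℝ} (hA : MeasurableSet A) (f : ℝ → ℝ) :
    ∫ z in A, f z ∂(gaussianReal t 1) = ∫ z in A, f z * gaussianPDFReal t 1 z := by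
  rw [gaussianReal_of_var_ne_zero t one_ne_zero,
    show gaussianPDF t 1 = (fun z => ((gaussianPDFReal t 1 z).toNNReal : ℝ≥0∞)) from rfl,
    restrict_withDensity hA,
    integral_withDensity_eq_integral_smul ((measurable_gaussianPDFReal t 1).real_toNNReal)]
  congr 1; ext z
  rw [NNReal.smul_def, Real.coe_toNNReal _ (gpdf_nonneg t z), smul_eq_mul, mul_comm]

lemma gammaS_eq {S : Set ℝ} (hS : MeasurableSet S) (t : ℝ) : gammaS S t = Fk S 0 t := by
  rw [gammaS, gaussianReal_apply_eq_integral t one_ne_zero S,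
    ENNReal.toReal_ofReal (setIntegral_nonneg hS fun z _ => gpdf_nonneg t z)]
  unfold Fk; simp

lemma truncMean_eq {S : Set ℝ} (hS : MeasurableSet S) (t : ℝ) :
    truncMean S t = Fk S 1 t / Fk S 0 t := by
  rw [truncMean, truncNormal, ProbabilityTheory.cond, integral_smul_measure]
  rw [show (∫ z in S, z ∂(gaussianReal t 1)) = ∫ z in S, z * gaussianPDFReal t 1 z from
    setIntegral_gaussianReal t hS id]
  have h1 : (Fk S 1 t) = ∫ z in S, z * gaussianPDFReal t 1 z := by unfold Fk; simp
  rw [← h1, ENNReal.toReal_inv, smul_eq_mul, ← gammaS, gammaS_eq hS, inv_mul_eq_div]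


lemma hasDerivAt_gpdf (z t : ℝ) :
    HasDerivAt (fun s => gaussianPDFReal s 1 z) ((z - t) * gaussianPDFReal t 1 z) t := by
  simp only [gpdf_def]
  have h2 : HasDerivAt (fun s : ℝ => z - s) (-1) t := (hasDerivAt_id t).const_sub z
  have h3 := h2.pow 2
  have h4 := (h3.neg).div_const 2
  have h1 : HasDerivAt (fun s : ℝ => -(z - s)^2/2) (z - t) t := by
    exact h4.congr_deriv (by ring)
  have h5 := (h1.exp).const_mul (Real.sqrt (2 * Real.pi))⁻¹
  exact h5.congr_deriv (by ring)

lemma hasDerivAt_Fk {S : Set ℝ} (hS : MeasurableSet S) (k : ℕ) (t₀ : ℝ) :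
    HasDerivAt (Fk S k) (Fk S (k+1) t₀ - t₀ * Fk S k t₀) t₀ := by
  set a : ℝ := 2*|t₀|+1 with ha_def
  have ha : (0:ℝ) ≤ a := by positivity
  have main := hasDerivAt_integral_of_dominated_loc_of_deriv_le
    (μ := volume.restrict S) (x₀ := t₀)
    (F := fun t z => z^k * gaussianPDFReal t 1 z)
    (F' := fun t z => z^k * ((z - t) * gaussianPDFReal t 1 z))
    (bound := fun z => (Real.sqrt (2 * Real.pi))⁻¹ *
      ((|z - t₀| + a)^(k+1) * Real.exp ((1/2) * |z - t₀| - (z - t₀)^2/2)))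
    (s := Metric.ball t₀ (1/2)) (Metric.ball_mem_nhds t₀ one_half_pos)
    (Filter.Eventually.of_forall fun t =>
      (((continuous_pow k).mul (gpdf_cont t)).aestronglyMeasurable))
    ((integrable_pow_gpdf k t₀).restrict)
    (((continuous_pow k).mul ((continuous_id.sub continuous_const).mul
      (gpdf_cont t₀))).aestronglyMeasurable)
    (ae_of_all _ ?_) ?_ (ae_of_all _ ?_)
  · have h := main.2
    have heq : (∫ z in S, z^k * ((z - t₀) * gaussianPDFReal t₀ 1 z))
        = Fk S (k+1) t₀ - t₀ * Fk S k t₀ := by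
      have h1 : (fun z : ℝ => z^k * ((z - t₀) * gaussianPDFReal t₀ 1 z))
          = fun z : ℝ => z^(k+1) * gaussianPDFReal t₀ 1 z - t₀ * (z^k * gaussianPDFReal t₀ 1 z) := by
        funext z; ring
      rw [h1, integral_sub ((integrable_pow_gpdf (k+1) t₀).restrict)
        (((integrable_pow_gpdf k t₀).restrict).const_mul t₀), MeasureTheory.integral_const_mul]
      rfl
    rw [heq] at h
    exact h
  · -- bound
    intro z t ht
    have habs : |t - t₀| ≤ 1/2 := by
      rw [Metric.mem_ball, Real.dist_eq] at ht; exact ht.le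
    rw [Real.norm_eq_abs, abs_mul, abs_mul, abs_pow,
      abs_of_nonneg (gpdf_nonneg t z), gpdf_def]
    have hz1 : |z| ≤ |z - t₀| + a := by
      have := abs_add_le (z - t₀) t₀
      simp only [sub_add_cancel] at this
      have h2 : |t₀| ≤ a := by rw [ha_def]; nlinarith [abs_nonneg t₀]
      linarith
    have hz2 : |z - t| ≤ |z - t₀| + a := by
      have := abs_add_le (z - t₀) (t₀ - t)
      have h3 : z - t₀ + (t₀ - t) = z - t := by ring
      rw [h3] at this
      rw [abs_sub_comm t₀ t] at this
      have h2 : (1:ℝ)/2 ≤ a := by rw [ha_def]; nlinarith [abs_nonneg t₀]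
      linarith
    have hexp : Real.exp (-(z - t)^2 / 2) ≤ Real.exp ((1/2) * |z - t₀| - (z - t₀)^2/2) := by
      refine Real.exp_le_exp.2 ?_
      have h6 : (z - t₀) * (t - t₀) ≤ |z - t₀| * |t - t₀| := by
        calc (z - t₀) * (t - t₀) ≤ |(z - t₀) * (t - t₀)| := le_abs_self _
          _ = |z - t₀| * |t - t₀| := abs_mul _ _
      have h7 : -((z - t₀) * (t - t₀)) ≤ |z - t₀| * |t - t₀| := by
        calc -((z - t₀) * (t - t₀)) ≤ |(z - t₀) * (t - t₀)| := neg_le_abs _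
          _ = |z - t₀| * |t - t₀| := abs_mul _ _
      have h8 : |z - t₀| * |t - t₀| ≤ |z - t₀| * (1/2) :=
        mul_le_mul_of_nonneg_left habs (abs_nonneg _)
      nlinarith [sq_nonneg (t - t₀)]
    calc |z|^k * (|z - t| * ((Real.sqrt (2 * Real.pi))⁻¹ * Real.exp (-(z - t)^2 / 2)))
        ≤ (|z - t₀| + a)^k * ((|z - t₀| + a) * ((Real.sqrt (2 * Real.pi))⁻¹ *
            Real.exp ((1/2) * |z - t₀| - (z - t₀)^2/2))) := by
          have e1 : (0:ℝ) ≤ (Real.sqrt (2 * Real.pi))⁻¹ := by positivity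
          refine mul_le_mul (pow_le_pow_left₀ (abs_nonneg z) hz1 k) ?_ (by positivity) (by positivity)
          exact mul_le_mul hz2 (mul_le_mul_of_nonneg_left hexp e1) (by positivity) (by positivity)
      _ = (Real.sqrt (2 * Real.pi))⁻¹ *
            ((|z - t₀| + a)^(k+1) * Real.exp ((1/2) * |z - t₀| - (z - t₀)^2/2)) := by
          rw [pow_succ]; ring
  · -- bound integrable
    exact (((integrable_master a (1/2) ha (k+1)).comp_sub_right t₀).const_mul _).restrict
  · -- pointwise derivative
    intro z t _
    exact (hasDerivAt_gpdf z t).const_mul (z^k)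


/-- The derivative of the truncated mean. -/
def Vr (S : Set ℝ) (t : ℝ) : ℝ := (Fk S 2 t * Fk S 0 t - (Fk S 1 t)^2) / (Fk S 0 t)^2

lemma hasDerivAt_truncMean {S : Set ℝ} (hS : MeasurableSet S) (hpos : ∀ t, 0 < gammaS S t)
    (t : ℝ) : HasDerivAt (truncMean S) (Vr S t) t := by
  have hF0 : ∀ s, 0 < Fk S 0 s := fun s => gammaS_eq hS s ▸ hpos s
  have h := (hasDerivAt_Fk hS 1 t).div (hasDerivAt_Fk hS 0 t) (hF0 t).ne'
  have heq : truncMean S = fun s => Fk S 1 s / Fk S 0 s := funext (truncMean_eq hS)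
  rw [heq]
  refine h.congr_deriv ?_
  unfold Vr
  field_simp
  ring

lemma integrable_sq_shift (t m : ℝ) :
    Integrable (fun z : ℝ => (z - m)^2 * gaussianPDFReal t 1 z) := by
  have h : (fun z : ℝ => (z - m)^2 * gaussianPDFReal t 1 z) = fun z : ℝ =>
      z^2 * gaussianPDFReal t 1 z - (2*m) * (z^1 * gaussianPDFReal t 1 z)
        + m^2 * (z^0 * gaussianPDFReal t 1 z) := by
    funext z; ring
  rw [h]
  exact ((integrable_pow_gpdf 2 t).sub ((integrable_pow_gpdf 1 t).const_mul _)).add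
    ((integrable_pow_gpdf 0 t).const_mul _)

lemma Vr_ge {S : Set ℝ} (hS : MeasurableSet S) (t : ℝ) (hF0 : 0 < Fk S 0 t) :
    Real.pi * (Fk S 0 t)^2 / 16 ≤ Vr S t := by
  set F := Fk S 0 t with hF
  set G := Fk S 1 t with hG
  set m := G / F with hm
  set r := Real.sqrt (2 * Real.pi) * F / 4 with hr
  have hsqrt : (0:ℝ) < Real.sqrt (2 * Real.pi) := Real.sqrt_pos.2 (by positivity)
  have hrpos : 0 < r := by rw [hr]; positivity
  set B := Set.Ioo (m - r) (m + r) with hB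
  have hBmeas : MeasurableSet B := measurableSet_Ioo
  have hphi_int : IntegrableOn (fun z : ℝ => z^0 * gaussianPDFReal t 1 z) S :=
    (integrable_pow_gpdf 0 t).restrict
  -- step 1 : mass of S ∩ B is at most F/2
  have step1 : ∫ z in S ∩ B, z^0 * gaussianPDFReal t 1 z ≤ F / 2 := by
    have hvol : volume (S ∩ B) < ∞ := by
      refine lt_of_le_of_lt (measure_mono Set.inter_subset_right) ?_
      rw [Real.volume_Ioo]; exact ENNReal.ofReal_lt_top
    have hb := norm_setIntegral_le_of_norm_le_const (μ := volume)
      (f := fun z : ℝ => z^0 * gaussianPDFReal t 1 z) (C := (Real.sqrt (2 * Real.pi))⁻¹)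
      hvol ?_
    · have hvol2 : (volume (S ∩ B)).toReal ≤ 2 * r := by
        have h1 : volume (S ∩ B) ≤ ENNReal.ofReal (2 * r) := by
          refine le_trans (measure_mono Set.inter_subset_right) ?_
          rw [Real.volume_Ioo]
          exact le_of_eq (by congr 1; ring)
        calc (volume (S ∩ B)).toReal ≤ (ENNReal.ofReal (2 * r)).toReal :=
              ENNReal.toReal_mono ENNReal.ofReal_ne_top h1
          _ = 2 * r := ENNReal.toReal_ofReal (by positivity)
      have h3 : (Real.sqrt (2 * Real.pi))⁻¹ * (2 * r) = F / 2 := by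
        rw [hr]; field_simp; ring
      calc ∫ z in S ∩ B, z^0 * gaussianPDFReal t 1 z
          ≤ ‖∫ z in S ∩ B, z^0 * gaussianPDFReal t 1 z‖ := le_abs_self _
        _ ≤ (Real.sqrt (2 * Real.pi))⁻¹ * (volume (S ∩ B)).toReal := hb
        _ ≤ (Real.sqrt (2 * Real.pi))⁻¹ * (2 * r) := by
            exact mul_le_mul_of_nonneg_left hvol2 (by positivity)
        _ = F / 2 := h3
    · intro z _
      simp only [pow_zero, one_mul, Real.norm_eq_abs, abs_of_nonneg (gpdf_nonneg t z)]
      exact gpdf_le t z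
  -- step 2 : splitting
  have step2 : (∫ z in S ∩ B, z^0 * gaussianPDFReal t 1 z)
      + (∫ z in S \ B, z^0 * gaussianPDFReal t 1 z) = F := by
    rw [hF]; unfold Fk
    exact integral_inter_add_diff hBmeas hphi_int
  have step3 : F / 2 ≤ ∫ z in S \ B, z^0 * gaussianPDFReal t 1 z := by linarith
  -- step 4 : second moment lower bound on S \ B
  have hsq_int : IntegrableOn (fun z : ℝ => (z - m)^2 * gaussianPDFReal t 1 z) S :=
    (integrable_sq_shift t m).restrict
  have step4 : r^2 * (F / 2) ≤ ∫ z in S, (z - m)^2 * gaussianPDFReal t 1 z := by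
    have h4a : ∫ z in S \ B, r^2 * (z^0 * gaussianPDFReal t 1 z)
        ≤ ∫ z in S \ B, (z - m)^2 * gaussianPDFReal t 1 z := by
      refine setIntegral_mono_on ((hphi_int.mono_set Set.diff_subset).const_mul _)
        (hsq_int.mono_set Set.diff_subset) (hS.diff hBmeas) ?_
      intro z hz
      have hz2 : r ≤ |z - m| := by
        rcases hz with ⟨_, hzB⟩
        rw [hB, Set.mem_Ioo, not_and_or] at hzB
        rcases hzB with h | h
        · push_neg at h; rw [abs_of_nonpos (by linarith)]; linarith
        · push_neg at h; rw [abs_of_nonneg (by linarith)]; linarith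
      have hz3 : r^2 ≤ (z - m)^2 := by
        calc r^2 ≤ |z - m|^2 := pow_le_pow_left₀ hrpos.le hz2 2
          _ = (z - m)^2 := sq_abs _
      rw [pow_zero, one_mul]
      exact mul_le_mul_of_nonneg_right hz3 (gpdf_nonneg t z)
    have h4b : ∫ z in S \ B, r^2 * (z^0 * gaussianPDFReal t 1 z)
        = r^2 * ∫ z in S \ B, z^0 * gaussianPDFReal t 1 z := integral_const_mul _ _
    have h4c : (∫ z in S \ B, (z - m)^2 * gaussianPDFReal t 1 z)
        ≤ ∫ z in S, (z - m)^2 * gaussianPDFReal t 1 z := by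
      refine setIntegral_mono_set hsq_int ?_ (HasSubset.Subset.eventuallyLE Set.diff_subset)
      exact ae_of_all _ fun z => mul_nonneg (sq_nonneg _) (gpdf_nonneg t z)
    have h4d : r^2 * (F / 2) ≤ r^2 * ∫ z in S \ B, z^0 * gaussianPDFReal t 1 z :=
      mul_le_mul_of_nonneg_left step3 (sq_nonneg r)
    linarith
  -- step 6 : expansion of the second moment
  have step6 : ∫ z in S, (z - m)^2 * gaussianPDFReal t 1 z
      = Fk S 2 t - 2 * m * G + m^2 * F := by
    have h : (fun z : ℝ => (z - m)^2 * gaussianPDFReal t 1 z) = fun z : ℝ =>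
        z^2 * gaussianPDFReal t 1 z - (2*m) * (z^1 * gaussianPDFReal t 1 z)
          + m^2 * (z^0 * gaussianPDFReal t 1 z) := by
      funext z; ring
    have h1 : Integrable (fun z : ℝ => z^2 * gaussianPDFReal t 1 z
        - (2*m) * (z^1 * gaussianPDFReal t 1 z)) (volume.restrict S) :=
      ((integrable_pow_gpdf 2 t).restrict).sub (((integrable_pow_gpdf 1 t).restrict).const_mul _)
    have h2 : Integrable (fun z : ℝ => m^2 * (z^0 * gaussianPDFReal t 1 z))
        (volume.restrict S) := ((integrable_pow_gpdf 0 t).restrict).const_mul _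
    have h3 : Integrable (fun z : ℝ => z^2 * gaussianPDFReal t 1 z) (volume.restrict S) :=
      (integrable_pow_gpdf 2 t).restrict
    have h4 : Integrable (fun z : ℝ => (2*m) * (z^1 * gaussianPDFReal t 1 z))
        (volume.restrict S) := ((integrable_pow_gpdf 1 t).restrict).const_mul _
    rw [h, integral_add h1 h2, integral_sub h3 h4, integral_const_mul, integral_const_mul]
    rw [hF, hG]; unfold Fk; ring
  -- put things together
  have hkey : Fk S 2 t * F - G^2 = F * (∫ z in S, (z - m)^2 * gaussianPDFReal t 1 z) := by
    rw [step6, hm]; field_simp; ring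
  have hr2 : r^2 = 2 * Real.pi * F^2 / 16 := by
    rw [hr, div_pow, mul_pow, Real.sq_sqrt (by positivity : (0:ℝ) ≤ 2 * Real.pi)]; ring
  rw [Vr, ← hF, ← hG, hkey]
  have hFF : F * (∫ z in S, (z - m)^2 * gaussianPDFReal t 1 z) / F^2
      = (∫ z in S, (z - m)^2 * gaussianPDFReal t 1 z) / F := by
    rw [pow_two, mul_div_mul_left _ _ hF0.ne']
  rw [hFF, le_div_iff₀ hF0]
  nlinarith [step4, hr2, hF0]


lemma Vr_pos {S : Set ℝ} (hS : MeasurableSet S) (hpos : ∀ t, 0 < gammaS S t) (t : ℝ) :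
    0 < Vr S t := by
  have hF0 : 0 < Fk S 0 t := gammaS_eq hS t ▸ hpos t
  have h1 := Vr_ge hS t hF0
  have h2 : 0 < Real.pi * (Fk S 0 t)^2/16 := by positivity
  linarith

lemma truncMean_strictMono {S : Set ℝ} (hS : MeasurableSet S) (hpos : ∀ t, 0 < gammaS S t) :
    StrictMono (truncMean S) := by
  refine strictMono_of_deriv_pos fun t => ?_
  rw [(hasDerivAt_truncMean hS hpos t).deriv]
  exact Vr_pos hS hpos t

lemma gap_lemma {S : Set ℝ} (hS : MeasurableSet S) (hpos : ∀ t, 0 < gammaS S t)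
    {c a b : ℝ} (hab : a ≤ b) (hc : ∀ s ∈ Set.Icc a b, c ≤ Vr S s) :
    c * (b - a) ≤ truncMean S b - truncMean S a := by
  have hderiv : ∀ s : ℝ, HasDerivAt (fun u => truncMean S u - c * u) (Vr S s - c) s := by
    intro s
    have hlin : HasDerivAt (fun u : ℝ => c * u) c s := by
      simpa using (hasDerivAt_id s).const_mul c
    exact (hasDerivAt_truncMean hS hpos s).sub hlin
  have hdiff : Differentiable ℝ (fun u => truncMean S u - c * u) :=
    fun s => (hderiv s).differentiableAt
  have hmono : MonotoneOn (fun u => truncMean S u - c * u) (Set.Icc a b) := by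
    refine monotoneOn_of_deriv_nonneg (convex_Icc a b) hdiff.continuous.continuousOn
      (hdiff.differentiableOn) ?_
    intro x hx
    rw [interior_Icc] at hx
    rw [(hderiv x).deriv]
    have := hc x (Set.mem_Icc_of_Ioo hx)
    linarith
  have h := hmono (Set.left_mem_Icc.2 hab) (Set.right_mem_Icc.2 hab) hab
  simp only at h
  nlinarith [h]

lemma gauss_toReal (t : ℝ) {A : Set ℝ} (hA : MeasurableSet A) :
    (gaussianReal t 1 A).toReal = ∫ z in A, z^0 * gaussianPDFReal t 1 z := by
  rw [gaussianReal_apply_eq_integral t one_ne_zero A,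
    ENNReal.toReal_ofReal (setIntegral_nonneg hA fun z _ => gpdf_nonneg t z)]
  simp

lemma gamma_lb {S : Set ℝ} (hS : MeasurableSet S) {β R tstar s : ℝ} (hR : 0 ≤ R)
    (htail : (gaussianReal 0 1 {z : ℝ | R < |z|}).toReal ≤ β/2)
    (hβ : β ≤ gammaS S tstar) (hs : |s - tstar| ≤ 1) :
    β/2 * Real.exp (-(R+1)^2/2) ≤ Fk S 0 s := by
  set B := {z : ℝ | |z - tstar| ≤ R} with hBdef
  have hBmeas : MeasurableSet B := by
    have : B = Metric.closedBall tstar R := by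
      ext z; simp [hBdef, Metric.mem_closedBall, Real.dist_eq]
    rw [this]; exact measurableSet_closedBall
  have hsplit := integral_inter_add_diff (μ := volume) (s := S) (f := fun z : ℝ =>
    z^0 * gaussianPDFReal tstar 1 z) hBmeas ((integrable_pow_gpdf 0 tstar).restrict)
  -- tail control
  have htail2 : (∫ z in S \ B, z^0 * gaussianPDFReal tstar 1 z) ≤ β/2 := by
    have hsub : (∫ z in S \ B, z^0 * gaussianPDFReal tstar 1 z)
        ≤ ∫ z in Bᶜ, z^0 * gaussianPDFReal tstar 1 z := by
      refine setIntegral_mono_set ((integrable_pow_gpdf 0 tstar).restrict)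
        (ae_of_all _ fun z => by
          simp only [pow_zero, one_mul]; exact gpdf_nonneg tstar z)
        (HasSubset.Subset.eventuallyLE fun z hz => hz.2)
    have hcompl : (∫ z in Bᶜ, z^0 * gaussianPDFReal tstar 1 z)
        = (gaussianReal tstar 1 Bᶜ).toReal := (gauss_toReal tstar hBmeas.compl).symm
    have hmap : gaussianReal tstar 1 Bᶜ = gaussianReal 0 1 {z : ℝ | R < |z|} := by
      have h1 : gaussianReal tstar 1 = (gaussianReal 0 1).map (· + tstar) := by
        rw [gaussianReal_map_add_const (μ := 0) (v := 1) tstar, zero_add]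
      rw [h1, Measure.map_apply (measurable_add_const tstar) hBmeas.compl]
      congr 1
      ext z
      simp [hBdef, not_le]
    rw [hcompl, hmap] at hsub
    exact le_trans hsub htail
  have hFtstar : β ≤ ∫ z in S, z^0 * gaussianPDFReal tstar 1 z := by
    have := gammaS_eq hS tstar
    unfold Fk at this
    linarith [hβ, this.symm.le]
  have hmid : β/2 ≤ ∫ z in S ∩ B, z^0 * gaussianPDFReal tstar 1 z := by
    rw [show (∫ z in S, z^0 * gaussianPDFReal tstar 1 z : ℝ)
      = Fk S 0 tstar from rfl] at hFtstar
    have : Fk S 0 tstar = (∫ z in S ∩ B, z^0 * gaussianPDFReal tstar 1 z)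
        + ∫ z in S \ B, z^0 * gaussianPDFReal tstar 1 z := by
      rw [hsplit]; rfl
    linarith
  -- pointwise comparison on B
  have hpoint : ∀ z ∈ S ∩ B, Real.exp (-(R+1)^2/2) * (z^0 * gaussianPDFReal tstar 1 z)
      ≤ z^0 * gaussianPDFReal s 1 z := by
    intro z hz
    have hzB : |z - tstar| ≤ R := hz.2
    have hz1 : |z - s| ≤ R + 1 := by
      have h2 := abs_add_le (z - tstar) (tstar - s)
      have h3 : z - tstar + (tstar - s) = z - s := by ring
      rw [h3] at h2
      rw [abs_sub_comm tstar s] at h2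
      linarith
    have hz2 : (z - s)^2 ≤ (R+1)^2 := by
      calc (z - s)^2 = |z - s|^2 := (sq_abs _).symm
        _ ≤ (R+1)^2 := pow_le_pow_left₀ (abs_nonneg _) hz1 2
    simp only [pow_zero, one_mul]
    rw [gpdf_def, gpdf_def]
    have hM : (0:ℝ) ≤ (Real.sqrt (2 * Real.pi))⁻¹ := by positivity
    calc Real.exp (-(R+1)^2/2) * ((Real.sqrt (2 * Real.pi))⁻¹ * Real.exp (-(z - tstar)^2/2))
        ≤ Real.exp (-(R+1)^2/2) * ((Real.sqrt (2 * Real.pi))⁻¹ * 1) := by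
          refine mul_le_mul_of_nonneg_left (mul_le_mul_of_nonneg_left ?_ hM) (Real.exp_pos _).le
          rw [Real.exp_le_one_iff]; nlinarith [sq_nonneg (z - tstar)]
      _ = (Real.sqrt (2 * Real.pi))⁻¹ * Real.exp (-(R+1)^2/2) := by ring
      _ ≤ (Real.sqrt (2 * Real.pi))⁻¹ * Real.exp (-(z - s)^2/2) := by
          refine mul_le_mul_of_nonneg_left (Real.exp_le_exp.2 (by linarith)) hM
  -- conclude
  have hstep : Real.exp (-(R+1)^2/2) * (β/2)
      ≤ ∫ z in S ∩ B, z^0 * gaussianPDFReal s 1 z := by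
    have h1 : Real.exp (-(R+1)^2/2) * (β/2)
        ≤ Real.exp (-(R+1)^2/2) * ∫ z in S ∩ B, z^0 * gaussianPDFReal tstar 1 z :=
      mul_le_mul_of_nonneg_left hmid (Real.exp_pos _).le
    have h2 : Real.exp (-(R+1)^2/2) * (∫ z in S ∩ B, z^0 * gaussianPDFReal tstar 1 z)
        = ∫ z in S ∩ B, Real.exp (-(R+1)^2/2) * (z^0 * gaussianPDFReal tstar 1 z) :=
      (integral_const_mul _ _).symm
    have h3 : (∫ z in S ∩ B, Real.exp (-(R+1)^2/2) * (z^0 * gaussianPDFReal tstar 1 z))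
        ≤ ∫ z in S ∩ B, z^0 * gaussianPDFReal s 1 z :=
      setIntegral_mono_on
        (((integrable_pow_gpdf 0 tstar).restrict).const_mul _)
        ((integrable_pow_gpdf 0 s).restrict)
        (hS.inter hBmeas) hpoint
    linarith
  have hfinal : (∫ z in S ∩ B, z^0 * gaussianPDFReal s 1 z) ≤ Fk S 0 s := by
    refine setIntegral_mono_set ((integrable_pow_gpdf 0 s).restrict)
      (ae_of_all _ fun z => by simp only [pow_zero, one_mul]; exact gpdf_nonneg s z)
      (HasSubset.Subset.eventuallyLE Set.inter_subset_left)
  linarith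

end TM

/-- monotonicity and a quantitative lower bound for the truncated mean
(Lemma `diff`). -/
theorem truncMean_sign_and_gap :
    (∀ S : Set ℝ, MeasurableSet S → (∀ t : ℝ, 0 < gammaS S t) →
      ∀ t tstar : ℝ,
        Real.sign (truncMean S t - truncMean S tstar) = Real.sign (t - tstar)) ∧
    (∀ β : ℝ, 0 < β → ∃ c : ℝ, 0 < c ∧
      ∀ S : Set ℝ, MeasurableSet S → (∀ t : ℝ, 0 < gammaS S t) →
        ∀ t tstar : ℝ, β ≤ gammaS S tstar →
          c * min 1 |t - tstar| ≤ |truncMean S t - truncMean S tstar|) := by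
  constructor
  · intro S hS hpos t tstar
    have hmono := TM.truncMean_strictMono hS hpos
    rcases lt_trichotomy t tstar with h | h | h
    · rw [Real.sign_of_neg (sub_neg.2 (hmono h)), Real.sign_of_neg (sub_neg.2 h)]
    · subst h; simp
    · rw [Real.sign_of_pos (sub_pos.2 (hmono h)), Real.sign_of_pos (sub_pos.2 h)]
  · intro β hβ
    have hiInter : (⋂ n : ℕ, {z : ℝ | (n:ℝ) < |z|}) = ∅ := by
      ext z
      simp only [Set.mem_iInter, Set.mem_setOf_eq, Set.mem_empty_iff_false, iff_false,
        not_forall, not_lt]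
      obtain ⟨n, hn⟩ := exists_nat_gt |z|
      exact ⟨n, hn.le⟩
    have htendsto : Tendsto (fun n : ℕ => gaussianReal 0 1 {z : ℝ | (n:ℝ) < |z|})
        atTop (𝓝 0) := by
      have h1 := tendsto_measure_iInter_atTop (μ := gaussianReal 0 1)
        (s := fun n : ℕ => {z : ℝ | (n:ℝ) < |z|})
        (fun n => (measurableSet_lt measurable_const continuous_abs.measurable).nullMeasurableSet)
        (fun i j hij z hz => by
          simp only [Set.mem_setOf_eq] at hz ⊢
          exact lt_of_le_of_lt (Nat.cast_le.mpr hij) hz)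
        ⟨0, measure_ne_top _ _⟩
      rwa [hiInter, measure_empty] at h1
    have htoReal : Tendsto (fun n : ℕ => (gaussianReal 0 1 {z : ℝ | (n:ℝ) < |z|}).toReal)
        atTop (𝓝 0) := by
      have h2 := (ENNReal.tendsto_toReal (by simp : (0:ℝ≥0∞) ≠ ⊤)).comp htendsto
      simpa [Function.comp_def] using h2
    obtain ⟨R, hR⟩ := (htoReal.eventually_le_const (by linarith : (0:ℝ) < β/2)).exists
    set κ := β/2 * Real.exp (-((R:ℝ)+1)^2/2) with hκdef
    have hκpos : 0 < κ := by positivity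
    refine ⟨Real.pi * κ^2/16, by positivity, ?_⟩
    intro S hS hpos t tstar hβγ
    set c := Real.pi * κ^2/16 with hcdef
    have hVlb : ∀ s ∈ Set.Icc (tstar-1) (tstar+1), c ≤ TM.Vr S s := by
      intro s hs
      have h1 : |s - tstar| ≤ 1 := abs_le.2 ⟨by linarith [hs.1], by linarith [hs.2]⟩
      have hκle : κ ≤ TM.Fk S 0 s := TM.gamma_lb hS (Nat.cast_nonneg R) hR hβγ h1
      have hF0 : 0 < TM.Fk S 0 s := TM.gammaS_eq hS s ▸ hpos s
      have h2 := TM.Vr_ge hS s hF0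
      have h4 : κ^2 ≤ (TM.Fk S 0 s)^2 := pow_le_pow_left₀ hκpos.le hκle 2
      have h3 : Real.pi * κ^2/16 ≤ Real.pi * (TM.Fk S 0 s)^2/16 := by
        nlinarith [Real.pi_pos, h4]
      rw [hcdef]; linarith
    have hmono := TM.truncMean_strictMono hS hpos
    rcases le_total tstar t with h | h
    · set d := min 1 (t - tstar) with hddef
      have hd0 : 0 ≤ d := le_min zero_le_one (by linarith)
      have hd1 : d ≤ 1 := min_le_left _ _
      have hdt : d ≤ t - tstar := min_le_right _ _
      have hgap := TM.gap_lemma hS hpos (a := tstar) (b := tstar + d) (by linarith)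
        (fun s hs => hVlb s ⟨by linarith [hs.1], by linarith [hs.2]⟩)
      have hle : truncMean S (tstar + d) ≤ truncMean S t := hmono.monotone (by linarith)
      have habs : |t - tstar| = t - tstar := abs_of_nonneg (by linarith)
      have habs2 : |truncMean S t - truncMean S tstar| = truncMean S t - truncMean S tstar :=
        abs_of_nonneg (sub_nonneg.2 (hmono.monotone h))
      rw [habs, habs2]
      calc c * min 1 (t - tstar) = c * (tstar + d - tstar) := by rw [← hddef]; ring
        _ ≤ truncMean S (tstar + d) - truncMean S tstar := hgap
        _ ≤ truncMean S t - truncMean S tstar := by linarith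
    · set d := min 1 (tstar - t) with hddef
      have hd0 : 0 ≤ d := le_min zero_le_one (by linarith)
      have hd1 : d ≤ 1 := min_le_left _ _
      have hdt : d ≤ tstar - t := min_le_right _ _
      have hgap := TM.gap_lemma hS hpos (a := tstar - d) (b := tstar) (by linarith)
        (fun s hs => hVlb s ⟨by linarith [hs.1], by linarith [hs.2]⟩)
      have hle : truncMean S t ≤ truncMean S (tstar - d) := hmono.monotone (by linarith)
      have habs : |t - tstar| = tstar - t := by
        rw [abs_sub_comm]; exact abs_of_nonneg (by linarith)
      have habs2 : |truncMean S t - truncMean S tstar| = truncMean S tstar - truncMean S t := by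
        rw [abs_sub_comm]; exact abs_of_nonneg (sub_nonneg.2 (hmono.monotone h))
      rw [habs, habs2]
      calc c * min 1 (tstar - t) = c * (tstar - (tstar - d)) := by rw [← hddef]; ring
        _ ≤ truncMean S tstar - truncMean S (tstar - d) := hgap
        _ ≤ truncMean S tstar - truncMean S t := by linarith
end
end
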